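/- arXiv:1304.1991 — 5 statements merged into one kernel-verified Lean document; each statement's English description precedes it below -/
import Mathlib

section
/- For every k ∈ ℤ₊ⁿ, the set W(k) contains a compact word, i.e., a word of the form (π(1) repeated m₁ times, π(2) repeated m₂ times, …, π(n) repeated m_n times) for some permutation π ∈ S_n and nonnegative integers m₁,…,m_n (necessarily m_i = k_{π(i)}). -/
/- STATEMENT 4: W(k) contains a compact word, i.e. one of the form (π(1) repeated m₁ times, …, π(n) repeated m_n times). -/

/- STATEMENT 0: the cocycle identity λ(στ, α) = λ(σ, τ·α) · λ(τ, α) for the scalars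
defined by x_α = λ(σ,α) x_{σ·α} in the quantum affine space algebra. -/

noncomputable section

/-- `q` is multiplicatively antisymmetric: `q i i = 1` and `q j i * q i j = 1`. -/
def MultAntisym (n : ℕ) (q : Fin n → Fin n → ℂ) : Prop :=
  (∀ i, q i i = 1) ∧ (∀ i j, q j i * q i j = 1)

/-- Relations of the quantum affine space: `x i * x j = q i j • (x j * x i)`. -/
def QRel (n : ℕ) (q : Fin n → Fin n → ℂ) :
    FreeAlgebra ℂ (Fin n) → FreeAlgebra ℂ (Fin n) → Prop :=
  fun a b => ∃ i j, a = FreeAlgebra.ι ℂ i * FreeAlgebra.ι ℂ j ∧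
    b = q i j • (FreeAlgebra.ι ℂ j * FreeAlgebra.ι ℂ i)

/-- The generators `x i` of the quantum affine space algebra `O_q^reg(ℂⁿ)`. -/
def qGen {n : ℕ} (q : Fin n → Fin n → ℂ) (i : Fin n) : RingQuot (QRel n q) :=
  RingQuot.mkAlgHom ℂ (QRel n q) (FreeAlgebra.ι ℂ i)

/-- The monomial `x_α = x_{α 1} ⋯ x_{α d}` associated to a word `α`. -/
def xWord {n d : ℕ} (q : Fin n → Fin n → ℂ) (α : Fin d → Fin n) : RingQuot (QRel n q) :=
  ((List.ofFn α).map (qGen q)).prod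

/-- The action of `S_d` on words: `(σ·α) i = α (σ⁻¹ i)`. -/
def permAct {n d : ℕ} (σ : Equiv.Perm (Fin d)) (α : Fin d → Fin n) : Fin d → Fin n :=
  α ∘ σ.symm

/-- `α` is the sorted word `δ(k)` of the multidegree `k` : the letter `i` repeated
`k i` times, in increasing order. -/
def IsSortedWord {n : ℕ} (k : Fin n → ℕ) {m : ℕ} (α : Fin m → Fin n) : Prop :=
  List.ofFn α = (List.ofFn fun i : Fin n => List.replicate (k i) i).flatten

namespace WC

variable {n : ℕ} (q : Fin n → Fin n → ℂ)

def xList (l : List (Fin n)) : RingQuot (QRel n q) := (l.map (qGen q)).prod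

lemma q_ne_zero (hq : MultAntisym n q) (i j : Fin n) : q i j ≠ 0 :=
  left_ne_zero_of_mul_eq_one (hq.2 j i)

/-- coefficient of the action on the PBW basis -/
def cc (i : Fin n) (v : Fin n →₀ ℕ) : ℂ := ∏ j : Fin n, (if j < i then q i j ^ v j else 1)

lemma cc_ne_zero (hq : MultAntisym n q) (i : Fin n) (v : Fin n →₀ ℕ) : cc q i v ≠ 0 := by
  rw [cc, Finset.prod_ne_zero_iff]
  intro j _
  split
  · exact pow_ne_zero _ (q_ne_zero q hq i j)
  · exact one_ne_zero

lemma cc_add_single (i j : Fin n) (v : Fin n →₀ ℕ) :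
    cc q i (v + Finsupp.single j 1) = cc q i v * (if j < i then q i j else 1) := by
  unfold cc
  set w := v + Finsupp.single j 1 with hwdef
  rw [← Finset.mul_prod_erase Finset.univ _ (Finset.mem_univ j),
    ← Finset.mul_prod_erase Finset.univ (fun l => if l < i then q i l ^ v l else 1)
      (Finset.mem_univ j)]
  have h1 : ∀ l : Fin n, l ∈ Finset.univ.erase j →
      (if l < i then q i l ^ w l else 1)
        = (if l < i then q i l ^ v l else 1) := by
    intro l hl
    have hwl : w l = v l := by
      rw [hwdef]
      simp [Finsupp.single_apply, Ne.symm (Finset.mem_erase.mp hl).1]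
    rw [hwl]
  rw [Finset.prod_congr rfl h1]
  have h2 : w j = v j + 1 := by rw [hwdef]; simp
  rw [h2]
  by_cases h : j < i
  · simp only [h, if_true, pow_succ]; ring
  · simp only [h, if_false]; ring

abbrev V (n : ℕ) := (Fin n →₀ ℕ) →₀ ℂ

def TT (i : Fin n) : V n →ₗ[ℂ] V n :=
  Finsupp.lsum ℂ (fun v => cc q i v • Finsupp.lsingle (v + Finsupp.single i 1))

lemma TT_single (i : Fin n) (v : Fin n →₀ ℕ) (x : ℂ) :
    TT q i (Finsupp.single v x) = cc q i v • Finsupp.single (v + Finsupp.single i 1) x := by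
  simp [TT]

lemma TT_comm (hq : MultAntisym n q) (i j : Fin n) :
    (TT q i * TT q j : Module.End ℂ (V n)) = q i j • (TT q j * TT q i) := by
  apply Finsupp.lhom_ext
  intro v x
  have key : cc q j v * cc q i (v + Finsupp.single j 1)
      = q i j * (cc q i v * cc q j (v + Finsupp.single i 1)) := by
    rw [cc_add_single, cc_add_single]
    rcases lt_trichotomy i j with h | h | h
    · rw [if_neg (asymm h), if_pos h]
      have h2 : q i j * q j i = 1 := by rw [mul_comm]; exact hq.2 i j
      linear_combination (-(cc q j v * cc q i v)) * h2
    · subst h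
      rw [if_neg (lt_irrefl i), hq.1 i]
      ring
    · rw [if_pos h, if_neg (asymm h)]
      ring
  calc (TT q i * TT q j) (Finsupp.single v x)
      = TT q i (cc q j v • Finsupp.single (v + Finsupp.single j 1) x) := by
        rw [Module.End.mul_apply, TT_single]
    _ = (cc q j v * cc q i (v + Finsupp.single j 1)) •
          Finsupp.single (v + Finsupp.single j 1 + Finsupp.single i 1) x := by
        rw [map_smul, TT_single, smul_smul]
    _ = (q i j * (cc q i v * cc q j (v + Finsupp.single i 1))) •
          Finsupp.single (v + Finsupp.single i 1 + Finsupp.single j 1) x := by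
        rw [key, add_right_comm]
    _ = (q i j • (TT q j * TT q i)) (Finsupp.single v x) := by
        rw [LinearMap.smul_apply, Module.End.mul_apply, TT_single, map_smul, TT_single,
          smul_smul, smul_smul, mul_assoc]

def rep (hq : MultAntisym n q) : RingQuot (QRel n q) →ₐ[ℂ] Module.End ℂ (V n) :=
  RingQuot.liftAlgHom ℂ ⟨FreeAlgebra.lift ℂ (fun i => (TT q i : Module.End ℂ (V n))), by
    rintro a b ⟨i, j, rfl, rfl⟩
    rw [map_mul, map_smul, map_mul]
    simp only [FreeAlgebra.lift_ι_apply]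
    exact TT_comm q hq i j⟩

lemma rep_qGen (hq : MultAntisym n q) (i : Fin n) : rep q hq (qGen q i) = TT q i := by
  rw [qGen, rep, RingQuot.liftAlgHom_mkAlgHom_apply, FreeAlgebra.lift_ι_apply]

lemma rep_xList (hq : MultAntisym n q) (l : List (Fin n)) :
    ∃ (v : Fin n →₀ ℕ) (s : ℂ), s ≠ 0 ∧
      rep q hq (xList q l) (Finsupp.single 0 1) = s • Finsupp.single v 1 := by
  induction l with
  | nil => exact ⟨0, 1, one_ne_zero, by simp [xList]⟩
  | cons a t ih =>
    obtain ⟨v, s, hs, h⟩ := ih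
    refine ⟨v + Finsupp.single a 1, cc q a v * s,
      mul_ne_zero (cc_ne_zero q hq a v) hs, ?_⟩
    have hx : xList q (a :: t) = qGen q a * xList q t := by
      simp [xList]
    rw [hx, map_mul, Module.End.mul_apply, h, map_smul, rep_qGen, TT_single, smul_smul,
      Finsupp.smul_single, Finsupp.smul_single, smul_eq_mul, smul_eq_mul, mul_comm s _]

lemma xList_cancel (hq : MultAntisym n q) {l : List (Fin n)} {a b : ℂ}
    (h : a • xList q l = b • xList q l) : a = b := by
  obtain ⟨v, s, hs, hrep⟩ := rep_xList q hq l
  have h2 := congrArg (fun z => (rep q hq z) (Finsupp.single 0 1)) h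
  simp only [map_smul, LinearMap.smul_apply, hrep, smul_smul] at h2
  have h3 := congrArg (fun f : V n => f v) h2
  simp only [Finsupp.smul_apply, Finsupp.single_eq_same, smul_eq_mul, mul_one] at h3
  exact mul_right_cancel₀ hs h3

lemma xList_append (l1 l2 : List (Fin n)) :
    xList q (l1 ++ l2) = xList q l1 * xList q l2 := by
  simp [xList]

lemma qGen_swap (i j : Fin n) :
    qGen q i * qGen q j = q i j • (qGen q j * qGen q i) := by
  have h : RingQuot.mkAlgHom ℂ (QRel n q) (FreeAlgebra.ι ℂ i * FreeAlgebra.ι ℂ j)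
      = RingQuot.mkAlgHom ℂ (QRel n q) (q i j • (FreeAlgebra.ι ℂ j * FreeAlgebra.ι ℂ i)) :=
    RingQuot.mkAlgHom_rel ℂ ⟨i, j, rfl, rfl⟩
  simpa only [map_mul, map_smul, qGen] using h

lemma xList_middle (c d : List (Fin n)) (a b : Fin n) :
    xList q (c ++ a :: b :: d) = q a b • xList q (c ++ b :: a :: d) := by
  have h1 : xList q (c ++ a :: b :: d) = xList q c * (qGen q a * (qGen q b * xList q d)) := by
    simp [xList, mul_assoc]
  have h2 : xList q (c ++ b :: a :: d) = xList q c * (qGen q b * (qGen q a * xList q d)) := by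
    simp [xList, mul_assoc]
  rw [h1, h2, ← mul_assoc (qGen q a), ← mul_assoc (qGen q b), qGen_swap q a b]
  rw [smul_mul_assoc, mul_smul_comm]

lemma move_left (j : Fin n) :
    ∀ (B c d : List (Fin n)),
      xList q (c ++ (B ++ j :: d)) = ((B.map (fun b => q b j)).prod) •
        xList q (c ++ j :: (B ++ d)) := by
  intro B
  induction B with
  | nil => intro c d; simp
  | cons b B' ih =>
    intro c d
    have h1 : c ++ (b :: B') ++ j :: d = (c ++ [b]) ++ (B' ++ j :: d) := by simp
    have h2 : (c ++ [b]) ++ j :: (B' ++ d) = c ++ b :: j :: (B' ++ d) := by simp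
    have h3 : c ++ j :: b :: (B' ++ d) = c ++ j :: (b :: B' ++ d) := by simp
    calc xList q (c ++ (b :: B' ++ j :: d))
        = xList q ((c ++ [b]) ++ (B' ++ j :: d)) := by rw [← h1]; simp
      _ = ((B'.map (fun x => q x j)).prod) • xList q ((c ++ [b]) ++ j :: (B' ++ d)) :=
          ih (c ++ [b]) d
      _ = ((B'.map (fun x => q x j)).prod) • (q b j • xList q (c ++ j :: b :: (B' ++ d))) := by
          rw [h2, xList_middle]
      _ = (((b :: B').map (fun x => q x j)).prod) • xList q (c ++ j :: (b :: B' ++ d)) := by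
          rw [smul_smul, ← h3]
          congr 1
          simp [mul_comm]

lemma move_block (j : Fin n) (u : ℕ) :
    ∀ (c B d : List (Fin n)),
      xList q (c ++ (B ++ (List.replicate u j ++ d)))
        = (((B.map (fun b => q b j)).prod) ^ u) •
          xList q (c ++ (List.replicate u j ++ (B ++ d))) := by
  induction u with
  | zero => intro c B d; simp
  | succ u ih =>
    intro c B d
    have h1 : c ++ (B ++ (List.replicate (u+1) j ++ d))
        = c ++ (B ++ j :: (List.replicate u j ++ d)) := by
      rw [List.replicate_succ]; simp
    have h2 : c ++ j :: (B ++ (List.replicate u j ++ d))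
        = (c ++ [j]) ++ (B ++ (List.replicate u j ++ d)) := by simp
    have h3 : (c ++ [j]) ++ (List.replicate u j ++ (B ++ d))
        = c ++ (List.replicate (u+1) j ++ (B ++ d)) := by
      rw [List.replicate_succ]; simp
    calc xList q (c ++ (B ++ (List.replicate (u+1) j ++ d)))
        = xList q (c ++ (B ++ j :: (List.replicate u j ++ d))) := by rw [h1]
      _ = ((B.map (fun b => q b j)).prod) •
            xList q (c ++ j :: (B ++ (List.replicate u j ++ d))) := move_left q j B c _
      _ = ((B.map (fun b => q b j)).prod) • (((B.map (fun b => q b j)).prod ^ u) •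
            xList q ((c ++ [j]) ++ (List.replicate u j ++ (B ++ d)))) := by
          rw [h2, ih (c ++ [j]) B d]
      _ = (((B.map (fun b => q b j)).prod) ^ (u+1)) •
            xList q (c ++ (List.replicate (u+1) j ++ (B ++ d))) := by
          rw [h3, smul_smul, pow_succ, mul_comm]

lemma realize_fun {m : ℕ} {f g : Fin m → Fin n}
    (h : (List.ofFn f).Perm (List.ofFn g)) : ∃ e : Equiv.Perm (Fin m), f ∘ e = g := by
  have hperm : (List.ofFn (f ∘ Tuple.sort f)).Perm (List.ofFn (g ∘ Tuple.sort g)) :=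
    (((Tuple.sort f).ofFn_comp_perm f).trans h).trans
      ((Tuple.sort g).ofFn_comp_perm g).symm
  have heq : f ∘ Tuple.sort f = g ∘ Tuple.sort g := by
    apply List.ofFn_inj.mp
    exact hperm.eq_of_sortedLE
      ((Tuple.monotone_sort f).sortedLE_ofFn) ((Tuple.monotone_sort g).sortedLE_ofFn)
  refine ⟨(Tuple.sort g).symm.trans (Tuple.sort f), funext fun x => ?_⟩
  have := congrFun heq ((Tuple.sort g).symm x)
  simpa using this

lemma realize {m : ℕ} (α : Fin m → Fin n) (l : List (Fin n))
    (h : l.Perm (List.ofFn α)) :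
    ∃ σ : Equiv.Perm (Fin m), List.ofFn (permAct σ α) = l := by
  have hlen : l.length = m := by simpa using h.length_eq
  obtain ⟨g, rfl⟩ : ∃ g : Fin m → Fin n, List.ofFn g = l := by
    refine ⟨fun i => l.get (Fin.cast hlen.symm i), ?_⟩
    apply List.ext_get (by simpa using hlen.symm)
    intro i h1 h2
    simp [List.get_ofFn]
  obtain ⟨e, he⟩ := realize_fun (h.symm)
  refine ⟨e⁻¹, ?_⟩
  have : permAct e⁻¹ α = α ∘ e := by
    funext x; simp [permAct, Equiv.Perm.inv_def]
  rw [this, he]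

/-! ### boundary counting -/

def bndA (a : Fin n) : List (Fin n) → ℕ
  | [] => 0
  | b :: t => (if a = b then 0 else 1) + bndA b t

def bnd : List (Fin n) → ℕ
  | [] => 0
  | a :: t => bndA a t

def lastc (a : Fin n) : List (Fin n) → Fin n
  | [] => a
  | b :: t => lastc b t

/-- boundary count between a last letter `x` and a following list -/
def glue' (x : Fin n) (ys : List (Fin n)) : ℕ :=
  match ys with
  | [] => 0
  | b :: _ => if x = b then 0 else 1

def glueO : List (Fin n) → List (Fin n) → ℕ
  | [], _ => 0
  | a :: t, ys => glue' (lastc a t) ys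

variable {q}

lemma bndA_cons (a b : Fin n) (t : List (Fin n)) :
    bndA a (b :: t) = (if a = b then 0 else 1) + bndA b t := rfl

lemma lastc_cons (a b : Fin n) (t : List (Fin n)) : lastc a (b :: t) = lastc b t := rfl

lemma bndA_append (ys : List (Fin n)) :
    ∀ (t : List (Fin n)) (a : Fin n),
      bndA a (t ++ ys) = bndA a t + glue' (lastc a t) ys + bnd ys := by
  intro t
  induction t with
  | nil =>
    intro a
    cases ys with
    | nil => simp [bndA, bnd, lastc, glue']
    | cons b t' => simp [bndA, bnd, lastc, glue']; split_ifs <;> simp_all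
  | cons b t' ih =>
    intro a
    rw [List.cons_append, bndA_cons, bndA_cons, lastc_cons, ih b]
    omega

lemma bnd_append (xs ys : List (Fin n)) :
    bnd (xs ++ ys) = bnd xs + glueO xs ys + bnd ys := by
  cases xs with
  | nil => simp [bnd, glueO]
  | cons a t => simp only [List.cons_append, bnd, glueO, bndA_append ys t a]

lemma bndA_replicate (a : Fin n) (u : ℕ) : bndA a (List.replicate u a) = 0 := by
  induction u with
  | zero => rfl
  | succ u ih => simp [List.replicate_succ, bndA, ih]

lemma bnd_replicate (a : Fin n) (u : ℕ) : bnd (List.replicate u a) = 0 := by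
  cases u with
  | zero => rfl
  | succ u => simp [List.replicate_succ, bnd, bndA_replicate]

lemma lastc_replicate (a : Fin n) (u : ℕ) : lastc a (List.replicate u a) = a := by
  induction u generalizing a with
  | zero => rfl
  | succ u ih => simp [List.replicate_succ, lastc, ih]

lemma lastc_mem (a : Fin n) (t : List (Fin n)) : lastc a t ∈ a :: t := by
  induction t generalizing a with
  | nil => simp [lastc]
  | cons b t' ih =>
    have := ih b
    simp only [lastc]
    rcases List.mem_cons.mp this with h | h
    · simp [h]
    · simp [h]

lemma glue'_head_congr (x : Fin n) {ys zs : List (Fin n)} (h : ys.head? = zs.head?) :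
    glue' x ys = glue' x zs := by
  cases ys with
  | nil => cases zs with
    | nil => rfl
    | cons b t => simp at h
  | cons b t => cases zs with
    | nil => simp at h
    | cons c s =>
      simp only [List.head?_cons, Option.some.injEq] at h
      simp [glue', h]

lemma glueO_head_congr (xs : List (Fin n)) {ys zs : List (Fin n)} (h : ys.head? = zs.head?) :
    glueO xs ys = glueO xs zs := by
  cases xs with
  | nil => rfl
  | cons a t => exact glue'_head_congr _ h

lemma glue'_le_one (x : Fin n) (ys : List (Fin n)) : glue' x ys ≤ 1 := by
  cases ys with
  | nil => simp [glue']
  | cons b t => simp only [glue']; split <;> omega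

lemma glue'_nil (x : Fin n) : glue' x ([] : List (Fin n)) = 0 := rfl

/-! ### decomposition and compact form -/

def CompactForm (l : List (Fin n)) : Prop :=
  ∃ (d : List (Fin n)) (c : Fin n → ℕ), d.Nodup ∧ (∀ j ∈ d, c j ≠ 0) ∧
    l = d.flatMap (fun j => List.replicate (c j) j)

def Decomp (l : List (Fin n)) : Prop :=
  ∃ (j : Fin n) (l1 B l2 : List (Fin n)) (s u : ℕ), 0 < s ∧ 0 < u ∧ B ≠ [] ∧
    j ∉ l1 ∧ j ∉ B ∧ (∀ b ∈ l2.head?, b ≠ j) ∧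
    l = l1 ++ (List.replicate s j ++ (B ++ (List.replicate u j ++ l2)))

lemma glueO_cons (a : Fin n) (t ys : List (Fin n)) :
    glueO (a :: t) ys = glue' (lastc a t) ys := rfl

lemma glueO_le {j : Fin n} {l1 : List (Fin n)} (hj1 : j ∉ l1) (ys : List (Fin n)) :
    glueO l1 ys ≤ glueO l1 [j] := by
  cases l1 with
  | nil => simp [glueO]
  | cons a t =>
    have hne : lastc a t ≠ j := by
      intro h; exact hj1 (h ▸ lastc_mem a t)
    have : glueO (a :: t) [j] = 1 := by simp [glueO, glue', hne]
    rw [this]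
    exact glue'_le_one _ _

lemma glue'_lastc_le {j : Fin n} {b : Fin n} {B' l2 : List (Fin n)}
    (hl2 : ∀ b ∈ l2.head?, b ≠ j) :
    glue' (lastc b B') l2 ≤ glue' j l2 := by
  cases l2 with
  | nil => simp [glue']
  | cons c t =>
    have hc : c ≠ j := hl2 c rfl
    have : glue' j (c :: t) = 1 := by simp [glue', Ne.symm hc]
    rw [this]
    exact glue'_le_one _ _

lemma head'_rep_append (j : Fin n) {s : ℕ} (hs : 0 < s) (X : List (Fin n)) :
    (List.replicate s j ++ X).head? = some j := by
  obtain ⟨s', rfl⟩ : ∃ s', s = s' + 1 := ⟨s - 1, (Nat.succ_pred_eq_of_pos hs).symm⟩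
  rw [List.replicate_succ]; rfl

lemma glueO_rep (j : Fin n) {s : ℕ} (hs : 0 < s) (Y : List (Fin n)) :
    glueO (List.replicate s j) Y = glue' j Y := by
  obtain ⟨s', rfl⟩ : ∃ s', s = s' + 1 := ⟨s - 1, (Nat.succ_pred_eq_of_pos hs).symm⟩
  rw [List.replicate_succ]
  simp [glueO, lastc_replicate]

lemma bnd_decomp {j : Fin n} {l1 B l2 : List (Fin n)} {s u : ℕ}
    (hs : 0 < s) (hu : 0 < u) (hB : B ≠ []) (hj1 : j ∉ l1) (hjB : j ∉ B)
    (hl2 : ∀ b ∈ l2.head?, b ≠ j) :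
    bnd (l1 ++ (List.replicate s j ++ (B ++ (List.replicate u j ++ l2))))
      = bnd l1 + bnd B + bnd l2 + glueO l1 [j] + glue' j l2 + 2 := by
  obtain ⟨b, B', rfl⟩ := List.exists_cons_of_ne_nil hB
  have hbj : b ≠ j := fun h => hjB (h ▸ (List.mem_cons_self : b ∈ b :: B'))
  have hlast : lastc b B' ≠ j := fun h => hjB (h ▸ lastc_mem b B')
  have e1 : glueO l1 (List.replicate s j ++ (b :: B' ++ (List.replicate u j ++ l2)))
      = glueO l1 [j] := glueO_head_congr l1 (by simp [head'_rep_append j hs])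
  rw [bnd_append, bnd_append, bnd_append, bnd_append, bnd_replicate, bnd_replicate,
    e1, glueO_rep j hs, glueO_rep j hu,
    glue'_head_congr j (ys := (b :: B') ++ (List.replicate u j ++ l2)) (zs := [b]) rfl]
  have h1 : glue' j [b] = 1 := by simp [glue', Ne.symm hbj]
  have h2 : glueO (b :: B') (List.replicate u j ++ l2) = 1 := by
    rw [glueO_cons,
      glue'_head_congr (lastc b B') (zs := [j]) (by simp [head'_rep_append j hu])]
    simp [glue', hlast]
  rw [h1, h2]
  omega

lemma bnd_optA {j : Fin n} {l1 B l2 : List (Fin n)} {s u : ℕ}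
    (hs : 0 < s) (hu : 0 < u) (hB : B ≠ []) (hj1 : j ∉ l1) (hjB : j ∉ B)
    (hl2 : ∀ b ∈ l2.head?, b ≠ j) :
    bnd (l1 ++ (List.replicate (s + u) j ++ (B ++ l2))) + 1
      ≤ bnd (l1 ++ (List.replicate s j ++ (B ++ (List.replicate u j ++ l2)))) := by
  rw [bnd_decomp hs hu hB hj1 hjB hl2]
  obtain ⟨b, B', rfl⟩ := List.exists_cons_of_ne_nil hB
  have hbj : b ≠ j := fun h => hjB (h ▸ (List.mem_cons_self : b ∈ b :: B'))
  have e1 : glueO l1 (List.replicate (s + u) j ++ (b :: B' ++ l2)) = glueO l1 [j] :=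
    glueO_head_congr l1
      (by simp [head'_rep_append j (Nat.lt_of_lt_of_le hs (Nat.le_add_right s u))])
  rw [bnd_append, bnd_append, bnd_append, bnd_replicate, e1,
    glueO_rep j (by omega : 0 < s + u)]
  have h1 : glue' j ((b :: B') ++ l2) = 1 := by simp [glue', Ne.symm hbj]
  have h2 : glueO (b :: B') l2 ≤ glue' j l2 := glue'_lastc_le hl2
  omega

lemma bnd_optB {j : Fin n} {l1 B l2 : List (Fin n)} {s u : ℕ}
    (hs : 0 < s) (hu : 0 < u) (hB : B ≠ []) (hj1 : j ∉ l1) (hjB : j ∉ B)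
    (hl2 : ∀ b ∈ l2.head?, b ≠ j) :
    bnd (l1 ++ (B ++ (List.replicate (s + u) j ++ l2))) + 1
      ≤ bnd (l1 ++ (List.replicate s j ++ (B ++ (List.replicate u j ++ l2)))) := by
  rw [bnd_decomp hs hu hB hj1 hjB hl2]
  obtain ⟨b, B', rfl⟩ := List.exists_cons_of_ne_nil hB
  have hlast : lastc b B' ≠ j := fun h => hjB (h ▸ lastc_mem b B')
  rw [bnd_append, bnd_append, bnd_append, bnd_replicate,
    glueO_rep j (by omega : 0 < s + u)]
  have h1 : glueO l1 ((b :: B') ++ (List.replicate (s+u) j ++ l2)) ≤ glueO l1 [j] :=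
    glueO_le hj1 _
  have h2 : glueO (b :: B') (List.replicate (s+u) j ++ l2) = 1 := by
    rw [glueO_cons,
      glue'_head_congr (lastc b B') (zs := [j]) (by simp [head'_rep_append j (Nat.lt_of_lt_of_le hs (Nat.le_add_right s u))])]
    simp [glue', hlast]
  omega

lemma head?_dropWhile_ne (p : Fin n → Bool) (l : List (Fin n)) :
    ∀ b ∈ (l.dropWhile p).head?, p b = false := by
  intro b hb
  have h := List.head?_dropWhile_not p l
  cases hD : (l.dropWhile p).head? with
  | none => rw [hD] at hb; simp at hb
  | some c =>
    simp only [hD] at h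
    rw [hD] at hb
    simp only [Option.mem_def, Option.some.injEq] at hb
    subst hb
    exact h

lemma takeWhile_eq_ne (a : Fin n) (l : List (Fin n)) :
    ∀ x ∈ l.takeWhile (fun x => x == a), x = a := by
  intro x hx
  have := List.mem_takeWhile_imp hx
  simpa using this

lemma dichotomy : ∀ (N : ℕ) (l : List (Fin n)), l.length ≤ N → CompactForm l ∨ Decomp l := by
  intro N
  induction N with
  | zero =>
    intro l hl
    have : l = [] := List.length_eq_zero_iff.mp (Nat.le_zero.mp hl)
    subst this
    exact Or.inl ⟨[], fun _ => 0, List.nodup_nil, by simp, rfl⟩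
  | succ N ih =>
    intro l hl
    cases l with
    | nil => exact Or.inl ⟨[], fun _ => 0, List.nodup_nil, by simp, rfl⟩
    | cons a t =>
      have hWD : (a :: t).takeWhile (fun x => x == a) ++ (a :: t).dropWhile (fun x => x == a)
          = a :: t := List.takeWhile_append_dropWhile
      generalize hWdef : (a :: t).takeWhile (fun x => x == a) = W at *
      generalize hDdef : (a :: t).dropWhile (fun x => x == a) = D at *
      have hWmem : ∀ x ∈ W, x = a := hWdef ▸ takeWhile_eq_ne a (a :: t)
      have hWrep : W = List.replicate W.length a := by
        rw [List.eq_replicate_iff]; exact ⟨rfl, hWmem⟩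
      have hWne : W ≠ [] := by
        rw [← hWdef, List.takeWhile_cons_of_pos (by simp)]
        simp
      have hWpos : 0 < W.length := List.length_pos_iff.mpr hWne
      have hDhead : ∀ b ∈ D.head?, b ≠ a := by
        intro b hb
        have := head?_dropWhile_ne (fun x => x == a) (a :: t) b (by rw [hDdef]; exact hb)
        simpa using this
      by_cases hmem : a ∈ D
      · -- can decompose
        right
        have hDne : D ≠ [] := List.ne_nil_of_mem hmem
        have hBD2 : D.takeWhile (fun x => !(x == a)) ++ D.dropWhile (fun x => !(x == a))
            = D := List.takeWhile_append_dropWhile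
        generalize hBdef : D.takeWhile (fun x => !(x == a)) = B at *
        generalize hD2def : D.dropWhile (fun x => !(x == a)) = D2 at *
        have hBmem : ∀ x ∈ B, x ≠ a := by
          intro x hx
          rw [← hBdef] at hx
          have := List.mem_takeWhile_imp hx
          simpa using this
        have haB : a ∉ B := fun h => hBmem a h rfl
        have hBne : B ≠ [] := by
          obtain ⟨d0, D', hD'⟩ := List.exists_cons_of_ne_nil hDne
          have hd0 : d0 ≠ a := hDhead d0 (by rw [hD']; rfl)
          rw [← hBdef, hD', List.takeWhile_cons_of_pos (by simp [hd0])]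
          simp
        have haD2 : a ∈ D2 := by
          rcases (List.mem_append.mp (hBD2 ▸ hmem)) with h | h
          · exact absurd rfl (hBmem a h)
          · exact h
        have hD2ne : D2 ≠ [] := List.ne_nil_of_mem haD2
        have hD2head : ∀ b ∈ D2.head?, b = a := by
          intro b hb
          have := head?_dropWhile_ne (fun x => !(x == a)) D b (by rw [hD2def]; exact hb)
          simpa using this
        have hW2D2 : D2.takeWhile (fun x => x == a) ++ D2.dropWhile (fun x => x == a)
            = D2 := List.takeWhile_append_dropWhile
        generalize hW2def : D2.takeWhile (fun x => x == a) = W2 at *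
        generalize hl2def : D2.dropWhile (fun x => x == a) = l2 at *
        have hW2mem : ∀ x ∈ W2, x = a := hW2def ▸ takeWhile_eq_ne a D2
        have hW2rep : W2 = List.replicate W2.length a := by
          rw [List.eq_replicate_iff]; exact ⟨rfl, hW2mem⟩
        have hW2ne : W2 ≠ [] := by
          obtain ⟨d0, D', hD'⟩ := List.exists_cons_of_ne_nil hD2ne
          have hd0 : d0 = a := hD2head d0 (by rw [hD']; rfl)
          rw [← hW2def, hD', List.takeWhile_cons_of_pos (by simp [hd0])]
          simp
        have hl2head : ∀ b ∈ l2.head?, b ≠ a := by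
          intro b hb
          have := head?_dropWhile_ne (fun x => x == a) D2 b (by rw [hl2def]; exact hb)
          simpa using this
        refine ⟨a, [], B, l2, W.length, W2.length, hWpos, List.length_pos_iff.mpr hW2ne,
          hBne, by simp, haB, hl2head, ?_⟩
        rw [List.nil_append, ← hWrep, ← hW2rep, ← hWD, ← hBD2, ← hW2D2]
      · -- recurse on D
        have hlD : D.length ≤ N := by
          have h1 : W.length + D.length = (a :: t).length := by
            rw [← List.length_append, hWD]
          simp only [List.length_cons] at h1
          have hl' : t.length + 1 ≤ N + 1 := by simpa using hl
          omega
        rcases ih D hlD with hC | hD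
        · left
          obtain ⟨d, c, hnd, hc0, hdEq⟩ := hC
          have had : a ∉ d := by
            intro hadm
            apply hmem
            rw [hdEq]
            exact List.mem_flatMap.mpr ⟨a, hadm,
              List.mem_replicate.mpr ⟨hc0 a hadm, rfl⟩⟩
          refine ⟨a :: d, fun x => if x = a then W.length else c x,
            List.nodup_cons.mpr ⟨had, hnd⟩, ?_, ?_⟩
          · intro x hx
            rcases List.mem_cons.mp hx with rfl | hx'
            · simpa using hWpos.ne'
            · have hxa : x ≠ a := fun h => had (h ▸ hx')
              simpa [hxa] using hc0 x hx'
          · have hcongr : (d.flatMap fun x => List.replicate (if x = a then W.length else c x) x)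
                = d.flatMap fun x => List.replicate (c x) x := by
              apply List.flatMap_congr
              intro x hx
              have hxa : x ≠ a := fun h => had (h ▸ hx)
              rw [if_neg hxa]
            rw [← hWD, List.flatMap_cons]
            beta_reduce
            rw [if_pos rfl, hcongr, ← hdEq, ← hWrep]
        · right
          obtain ⟨j, l1, B, l2, s, u, hs, hu, hBne, hjl1, hjB, hl2h, hDeq⟩ := hD
          have hjD : j ∈ D := by
            rw [hDeq]
            obtain ⟨s', rfl⟩ : ∃ s', s = s' + 1 := ⟨s - 1, (Nat.succ_pred_eq_of_pos hs).symm⟩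
            simp [List.replicate_succ]
          have hja : j ≠ a := fun h => hmem (h ▸ hjD)
          have hjW : j ∉ W := fun h => hja (hWmem j h)
          refine ⟨j, W ++ l1, B, l2, s, u, hs, hu, hBne, ?_, hjB, hl2h, ?_⟩
          · intro h
            rcases List.mem_append.mp h with h | h
            · exact hjW h
            · exact hjl1 h
          · rw [List.append_assoc, ← hDeq, hWD]

lemma compact_to_perm (d : List (Fin n)) (hd : d.Nodup) (c : Fin n → ℕ) :
    ∃ (π : Equiv.Perm (Fin n)) (mv : Fin n → ℕ),
      (List.ofFn fun i : Fin n => List.replicate (mv i) (π i)).flatten =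
        d.flatMap (fun j => List.replicate (c j) j) := by
  classical
  set extra := (List.finRange n).filter (fun x => decide (x ∉ d)) with hextra
  set d' := d ++ extra with hd'
  have hextnd : extra.Nodup := (List.nodup_finRange n).filter _
  have hdisj : d.Disjoint extra := by
    intro x hx hx2
    rw [hextra, List.mem_filter] at hx2
    have hx3 : x ∉ d := by simpa using hx2.2
    exact hx3 hx
  have hnd' : d'.Nodup := hd.append hextnd hdisj
  have hmem' : ∀ x : Fin n, x ∈ d' := by
    intro x
    rw [hd', List.mem_append]
    by_cases h : x ∈ d
    · exact Or.inl h
    · exact Or.inr (by rw [hextra, List.mem_filter]; simp [h, List.mem_finRange])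
  have hperm : d'.Perm (List.finRange n) :=
    (List.perm_ext_iff_of_nodup hnd' (List.nodup_finRange n)).mpr
      (fun x => by simp [hmem' x, List.mem_finRange])
  have hlen : d'.length = n := by simpa using hperm.length_eq
  have hof : List.ofFn (fun i : Fin n => d'.get (Fin.cast hlen.symm i)) = d' := by
    apply List.ext_get (by simpa using hlen.symm)
    intro i h1 h2
    simp [List.get_ofFn]
  have hinj : Function.Injective (fun i : Fin n => d'.get (Fin.cast hlen.symm i)) := by
    intro i j hij
    have := List.Nodup.get_inj_iff hnd' |>.mp hij
    exact Fin.cast_injective _ (by exact this)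
  set π : Equiv.Perm (Fin n) :=
    Equiv.ofBijective _ ((Finite.injective_iff_bijective).mp hinj) with hπ
  have hπap : ∀ i, π i = d'.get (Fin.cast hlen.symm i) := fun i => rfl
  set c' : Fin n → ℕ := fun j => if j ∈ d then c j else 0 with hc'
  refine ⟨π, fun i => c' (π i), ?_⟩
  have h1 : (List.ofFn fun i : Fin n => List.replicate (c' (π i)) (π i))
      = d'.map (fun j => List.replicate (c' j) j) := by
    rw [← hof, List.map_ofFn]
    rfl
  rw [h1, ← List.flatMap, hd', List.flatMap_append]
  have h2 : extra.flatMap (fun j => List.replicate (c' j) j) = [] := by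
    rw [List.flatMap_eq_nil_iff]
    intro x hx
    have : x ∉ d := by
      rw [hextra, List.mem_filter] at hx
      simpa using hx.2
    simp [hc', this]
  have h3 : d.flatMap (fun j => List.replicate (c' j) j)
      = d.flatMap (fun j => List.replicate (c j) j) := by
    apply List.flatMap_congr
    intro x hx
    simp [hc', hx]
  rw [h2, h3, List.append_nil]

end WC

theorem W_contains_compact_word (n : ℕ) (q : Fin n → Fin n → ℂ) (hq : MultAntisym n q)
    (k : Fin n → ℕ) (m : ℕ) (α : Fin m → Fin n) (hα : IsSortedWord k α)
    -- `L σ` is the scalar `λ(σ, δ(k))`: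
    (L : Equiv.Perm (Fin m) → ℂ)
    (hL : ∀ σ, xWord q α = L σ • xWord q (permAct σ α))
    -- `w = w_q(k)`:
    (w : ℝ) (hw : IsLeast {r | ∃ σ, r = ‖L σ‖} w) :
    ∃ σ : Equiv.Perm (Fin m), ‖L σ‖ = w ∧
      ∃ (π : Equiv.Perm (Fin n)) (mv : Fin n → ℕ),
        List.ofFn (permAct σ α) =
          (List.ofFn fun i : Fin n => List.replicate (mv i) (π i)).flatten := by
  classical
  obtain ⟨σ₀, hσ₀⟩ := hw.1
  have hw0 : 0 ≤ w := by
    rw [hσ₀]; exact norm_nonneg _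
  set P : List (Fin n) → Prop :=
    fun l => ∃ σ, ‖L σ‖ = w ∧ List.ofFn (permAct σ α) = l with hP
  have hperm0 : ∀ σ : Equiv.Perm (Fin m), (List.ofFn (permAct σ α)).Perm (List.ofFn α) :=
    fun σ => Equiv.Perm.ofFn_comp_perm σ.symm α
  have transfer : ∀ (l l' : List (Fin n)) (z : ℂ), P l → l.Perm l' →
      WC.xList q l = z • WC.xList q l' → ‖z‖ ≤ 1 → P l' := by
    rintro l l' z ⟨σ, habs, hofn⟩ hpll' hx hz
    have hl'p : l'.Perm (List.ofFn α) := hpll'.symm.trans (hofn ▸ hperm0 σ)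
    obtain ⟨σ', hσ'⟩ := WC.realize α l' hl'p
    have e1 : xWord q α = L σ • WC.xList q l := by
      rw [hL σ, show xWord q (permAct σ α)
        = WC.xList q (List.ofFn (permAct σ α)) from rfl, hofn]
    have e2 : xWord q α = L σ' • WC.xList q l' := by
      rw [hL σ', show xWord q (permAct σ' α)
        = WC.xList q (List.ofFn (permAct σ' α)) from rfl, hσ']
    have e3 : L σ' • WC.xList q l' = (L σ * z) • WC.xList q l' := by
      rw [← e2, e1, hx, smul_smul]
    have e4 : L σ' = L σ * z := WC.xList_cancel q hq e3
    have e5 : ‖L σ'‖ ≤ w := by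
      rw [e4, norm_mul, habs]
      calc w * ‖z‖ ≤ w * 1 := mul_le_mul_of_nonneg_left hz hw0
        _ = w := mul_one w
    exact ⟨σ', le_antisymm e5 (hw.2 ⟨σ', rfl⟩), hσ'⟩
  have main : ∀ (N : ℕ) (l : List (Fin n)), WC.bnd l < N → P l →
      ∃ l', P l' ∧ WC.CompactForm l' := by
    intro N
    induction N with
    | zero => intro l hbnd; exact absurd hbnd (Nat.not_lt_zero _)
    | succ N ih =>
      intro l hbnd hPl
      rcases WC.dichotomy l.length l le_rfl with hC | hD
      · exact ⟨l, hPl, hC⟩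
      · obtain ⟨j, l1, B, l2, s, u, hs, hu, hBne, hj1, hjB, hl2h, rfl⟩ := hD
        set Rs := List.replicate s j with hRs
        set Ru := List.replicate u j with hRu
        set Pz := (B.map (fun b => q b j)).prod with hPzdef
        have hPzne : Pz ≠ 0 := by
          rw [hPzdef]
          apply List.prod_ne_zero
          intro h0
          obtain ⟨b, _, hb0⟩ := List.mem_map.mp h0
          exact WC.q_ne_zero q hq b j hb0
        have habsPos : 0 ≤ ‖Pz‖ := norm_nonneg _
        rcases le_total ‖Pz‖ 1 with hle | hge
        · -- move the second block left
          set lA := l1 ++ (Rs ++ (Ru ++ (B ++ l2))) with hlA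
          have hxA : WC.xList q (l1 ++ (Rs ++ (B ++ (Ru ++ l2))))
              = (Pz ^ u) • WC.xList q lA := by
            have h := WC.move_block q j u (l1 ++ Rs) B l2
            rw [List.append_assoc, List.append_assoc] at h
            exact h
          have hpermA : (l1 ++ (Rs ++ (B ++ (Ru ++ l2)))).Perm lA := by
            apply List.Perm.append_left
            apply List.Perm.append_left
            rw [← List.append_assoc, ← List.append_assoc]
            exact List.perm_append_comm.append_right l2
          have hPA : P lA := transfer _ _ _ hPl hpermA hxA
            (by rw [norm_pow]; exact pow_le_one₀ habsPos hle)
          have hbndA : WC.bnd lA < N := by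
            have heq : lA = l1 ++ (List.replicate (s+u) j ++ (B ++ l2)) := by
              rw [hlA, hRs, hRu, List.replicate_add, List.append_assoc]
            have h := WC.bnd_optA hs hu hBne hj1 hjB hl2h
            rw [← heq, ← hRs, ← hRu] at h
            omega
          exact ih lA hbndA hPA
        · -- move the first block right
          set lB := l1 ++ (B ++ (Rs ++ (Ru ++ l2))) with hlB
          have hxB0 : WC.xList q lB
              = (Pz ^ s) • WC.xList q (l1 ++ (Rs ++ (B ++ (Ru ++ l2)))) :=
            WC.move_block q j s l1 B (Ru ++ l2)
          have hxB : WC.xList q (l1 ++ (Rs ++ (B ++ (Ru ++ l2))))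
              = ((Pz ^ s)⁻¹) • WC.xList q lB := by
            rw [hxB0, smul_smul, inv_mul_cancel₀ (pow_ne_zero s hPzne), one_smul]
          have hpermB : (l1 ++ (Rs ++ (B ++ (Ru ++ l2)))).Perm lB := by
            apply List.Perm.append_left
            rw [show Rs ++ (B ++ (Ru ++ l2)) = (Rs ++ B) ++ (Ru ++ l2) from
                (List.append_assoc _ _ _).symm,
              show B ++ (Rs ++ (Ru ++ l2)) = (B ++ Rs) ++ (Ru ++ l2) from
                (List.append_assoc _ _ _).symm]
            exact List.perm_append_comm.append_right _
          have hPB : P lB := transfer _ _ _ hPl hpermB hxB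
            (by
              rw [norm_inv, norm_pow]
              exact (inv_le_one₀ (by positivity)).mpr (one_le_pow₀ hge))
          have hbndB : WC.bnd lB < N := by
            have heq : lB = l1 ++ (B ++ (List.replicate (s+u) j ++ l2)) := by
              rw [hlB, hRs, hRu, List.replicate_add, List.append_assoc]
            have h := WC.bnd_optB hs hu hBne hj1 hjB hl2h
            rw [← heq, ← hRs, ← hRu] at h
            omega
          exact ih lB hbndB hPB
  obtain ⟨l', ⟨σ, habs, hofn⟩, ⟨d, c, hnd, hc0, hflat⟩⟩ :=
    main (WC.bnd (List.ofFn (permAct σ₀ α)) + 1) (List.ofFn (permAct σ₀ α))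
      (Nat.lt_succ_self _) ⟨σ₀, hσ₀.symm, rfl⟩
  obtain ⟨π, mv, hπ⟩ := WC.compact_to_perm d hnd c
  exact ⟨σ, habs, π, mv, by rw [hofn, hflat, ← hπ]⟩
end
end

section
/- Let k ∈ ℤ₊ⁿ and let α ∈ W(k) be noncompact; suppose the letter j has at least two maximal nonempty blocks in α. Then there exists σ ∈ S_{|k|} such that σ·α ∈ W(k), the number of maximal nonempty j-blocks of σ·α equals that of α minus 1, and every letter having at most one maximal nonempty block in α also has at most one in σ·α. -/
/- STATEMENT 5: compactification step: if α ∈ W(k) has at least two maximal nonempty j-blocks, there is σ with σ·α ∈ W(k), one fewer maximal j-block, and not increasing the block count of letters that had at most one block. -/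

/- STATEMENT 0: the cocycle identity λ(στ, α) = λ(σ, τ·α) · λ(τ, α) for the scalars
defined by x_α = λ(σ,α) x_{σ·α} in the quantum affine space algebra. -/

noncomputable section

/-- The number `N(l, j)` of maximal nonempty `j`-blocks (runs of the letter `j`) in `l`. -/
def countBlocks {n : ℕ} (j : Fin n) : List (Fin n) → ℕ
  | [] => 0
  | [a] => if a = j then 1 else 0
  | a :: b :: l => (if a = j ∧ b ≠ j then 1 else 0) + countBlocks j (b :: l)

namespace CS

variable {n : ℕ}

/-- multidegree of a word -/
def deg : List (Fin n) → (Fin n →₀ ℕ)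
  | [] => 0
  | a :: l => Finsupp.single a 1 + deg l

lemma deg_eq_sum (l : List (Fin n)) : deg l = (l.map fun a => Finsupp.single a (1:ℕ)).sum := by
  induction l with
  | nil => rfl
  | cons a t ih => simp [deg, ih]

lemma deg_perm {l₁ l₂ : List (Fin n)} (h : l₁.Perm l₂) : deg l₁ = deg l₂ := by
  rw [deg_eq_sum, deg_eq_sum]
  exact (h.map _).sum_eq

def cc (q : Fin n → Fin n → ℂ) (i : Fin n) (d : Fin n →₀ ℕ) : ℂ :=
  ∏ t : Fin n, (if t < i then q i t else 1) ^ d t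

lemma cc_add_single (q : Fin n → Fin n → ℂ) (i j : Fin n) (d : Fin n →₀ ℕ) :
    cc q i (d + Finsupp.single j 1) = cc q i d * (if j < i then q i j else 1) := by
  unfold cc
  simp only [Finsupp.add_apply, pow_add]
  rw [Finset.prod_mul_distrib]
  congr 1
  rw [Finset.prod_eq_single j]
  · simp
  · intro t _ ht
    rw [Finsupp.single_eq_of_ne' (Ne.symm ht), pow_zero]
  · simp

lemma cc_ne_zero {q : Fin n → Fin n → ℂ} (hq : MultAntisym n q) (i : Fin n) (d : Fin n →₀ ℕ) :
    cc q i d ≠ 0 := by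
  unfold cc
  apply Finset.prod_ne_zero_iff.2
  intro t _
  apply pow_ne_zero
  split_ifs
  · exact right_ne_zero_of_mul_eq_one (hq.2 i t)
  · exact one_ne_zero

def Lam (q : Fin n → Fin n → ℂ) : List (Fin n) → ℂ
  | [] => 1
  | a :: l => cc q a (deg l) * Lam q l

lemma Lam_ne_zero {q : Fin n → Fin n → ℂ} (hq : MultAntisym n q) (l : List (Fin n)) :
    Lam q l ≠ 0 := by
  induction l with
  | nil => exact one_ne_zero
  | cons a t ih => exact mul_ne_zero (cc_ne_zero hq a (deg t)) ih

abbrev V (n : ℕ) := (Fin n →₀ ℕ) →₀ ℂ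

def T (q : Fin n → Fin n → ℂ) (i : Fin n) : Module.End ℂ (V n) :=
  Finsupp.lsum ℂ fun d =>
    LinearMap.toSpanSingleton ℂ (V n) (Finsupp.single (d + Finsupp.single i 1) (cc q i d))

lemma T_single (q : Fin n → Fin n → ℂ) (i : Fin n) (d : Fin n →₀ ℕ) (x : ℂ) :
    T q i (Finsupp.single d x) = Finsupp.single (d + Finsupp.single i 1) (x * cc q i d) := by
  simp [T, Finsupp.smul_single, LinearMap.toSpanSingleton_apply, smul_eq_mul]

lemma T_rel {q : Fin n → Fin n → ℂ} (hq : MultAntisym n q) (i j : Fin n) :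
    T q i * T q j = q i j • (T q j * T q i) := by
  apply Finsupp.lhom_ext
  intro d x
  rw [Module.End.mul_apply, LinearMap.smul_apply, Module.End.mul_apply, T_single, T_single,
    T_single, T_single, Finsupp.smul_single]
  rw [cc_add_single, cc_add_single]
  have hd : d + Finsupp.single j 1 + Finsupp.single i 1
      = d + Finsupp.single i 1 + Finsupp.single j 1 := by
    rw [add_assoc, add_assoc, add_comm (Finsupp.single j 1)]
  rw [hd]
  congr 1
  rcases lt_trichotomy i j with h | h | h
  · rw [if_neg (lt_asymm h), if_pos h]
    simp only [smul_eq_mul]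
    linear_combination (-(x * cc q i d * cc q j d)) * hq.2 i j
  · subst h
    rw [if_neg (lt_irrefl i), hq.1 i, one_smul]
  · rw [if_pos h, if_neg (lt_asymm h)]
    simp only [smul_eq_mul]
    ring

def phi (q : Fin n → Fin n → ℂ) (hq : MultAntisym n q) :
    RingQuot (QRel n q) →ₐ[ℂ] Module.End ℂ (V n) :=
  RingQuot.liftAlgHom ℂ ⟨FreeAlgebra.lift ℂ (T q), by
    rintro x y ⟨i, j, rfl, rfl⟩
    rw [map_mul, map_smul, map_mul]
    simp only [FreeAlgebra.lift_ι_apply]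
    exact T_rel hq i j⟩

lemma phi_eval (q : Fin n → Fin n → ℂ) (hq : MultAntisym n q) (l : List (Fin n)) :
    phi q hq ((l.map (qGen q)).prod) (Finsupp.single 0 1)
      = Finsupp.single (deg l) (Lam q l) := by
  induction l with
  | nil => simp [deg, Lam]
  | cons a t ih =>
    rw [List.map_cons, List.prod_cons, map_mul, Module.End.mul_apply, ih]
    have : phi q hq (qGen q a) = T q a := by
      rw [qGen, phi, RingQuot.liftAlgHom_mkAlgHom_apply, FreeAlgebra.lift_ι_apply]
    rw [this, T_single]
    show _ = Finsupp.single (Finsupp.single a 1 + deg t) (cc q a (deg t) * Lam q t)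
    rw [add_comm, mul_comm]

lemma lam_det {q : Fin n → Fin n → ℂ} (hq : MultAntisym n q) {m : ℕ}
    (αf βf : Fin m → Fin n) (z : ℂ)
    (hdeg : deg (List.ofFn βf) = deg (List.ofFn αf))
    (h : xWord q αf = z • xWord q βf) :
    Lam q (List.ofFn αf) = z * Lam q (List.ofFn βf) := by
  have h1 := congrArg (phi q hq) h
  rw [map_smul] at h1
  have h2 := congrArg (fun F : Module.End ℂ (V n) => F (Finsupp.single 0 1)) h1
  simp only [LinearMap.smul_apply] at h2
  rw [show xWord q αf = ((List.ofFn αf).map (qGen q)).prod from rfl] at h2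
  rw [show xWord q βf = ((List.ofFn βf).map (qGen q)).prod from rfl] at h2
  rw [phi_eval, phi_eval, hdeg, Finsupp.smul_single] at h2
  have := congrArg (fun f : (Fin n →₀ ℕ) →₀ ℂ => f (deg (List.ofFn αf))) h2
  simpa using this


section Real

variable (q : Fin n → Fin n → ℂ)

def aQ (a s : Fin n) : ℝ := if a = s then 1 else ‖q a s‖

def mm (a s : Fin n) : ℝ :=
  if s < a then ‖q a s‖ else if a < s then ‖q s a‖ else 1

variable {q}

lemma mm_symm (a s : Fin n) : mm q a s = mm q s a := by
  unfold mm
  rcases lt_trichotomy a s with h | h | h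
  · rw [if_neg (lt_asymm h), if_pos h, if_pos h]
  · subst h; simp
  · rw [if_pos h, if_neg (lt_asymm h), if_pos h]

lemma aQ_pos (hq : MultAntisym n q) (a s : Fin n) : 0 < aQ q a s := by
  unfold aQ
  split_ifs with h
  · norm_num
  · exact norm_pos_iff.2 (right_ne_zero_of_mul_eq_one (hq.2 a s))

lemma aQ_mul (hq : MultAntisym n q) (a s : Fin n) : aQ q a s * aQ q s a = 1 := by
  unfold aQ
  split_ifs with h h2 h2
  · norm_num
  · exact absurd h.symm h2
  · exact absurd h2.symm h
  · rw [← norm_mul]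
    have := hq.2 s a
    rw [this]
    simp

variable (q)

def GG : List (Fin n) → ℝ
  | [] => 1
  | a :: l => (l.map (aQ q a)).prod * GG l

def SS : List (Fin n) → ℝ
  | [] => 1
  | a :: l => (l.map (mm q a)).prod * SS l

def EE (x y : List (Fin n)) : ℝ := (x.map fun a => (y.map (aQ q a)).prod).prod

variable {q}

lemma SS_perm {l₁ l₂ : List (Fin n)} (h : l₁.Perm l₂) : SS q l₁ = SS q l₂ := by
  induction h with
  | nil => rfl
  | cons a h ih => simp only [SS, ih, (h.map (mm q a)).prod_eq]
  | swap a b l =>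
    simp only [SS, List.map_cons, List.prod_cons]
    rw [mm_symm]
    ring
  | trans h1 h2 ih1 ih2 => rw [ih1, ih2]

lemma listprod_pow (f : Fin n → ℝ) (c : ℕ) (l : List (Fin n)) :
    ((l.map f).prod) ^ c = (l.map fun s => f s ^ c).prod := by
  induction l with
  | nil => simp
  | cons a t ih => simp [mul_pow, ih]

lemma listprod_mul (f g : Fin n → ℝ) (l : List (Fin n)) :
    (l.map f).prod * (l.map g).prod = (l.map fun s => f s * g s).prod := by
  induction l with
  | nil => simp
  | cons a t ih => simp only [List.map_cons, List.prod_cons]; rw [← ih]; ring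

lemma prod_pow_deg {M : Type*} [CommMonoid M] (f : Fin n → M) (l : List (Fin n)) :
    ∏ t : Fin n, f t ^ (deg l) t = (l.map f).prod := by
  induction l with
  | nil => simp [deg]
  | cons a t ih =>
    simp only [deg, Finsupp.add_apply, pow_add, Finset.prod_mul_distrib, List.map_cons,
      List.prod_cons, ih]
    congr 1
    rw [Finset.prod_eq_single a]
    · simp
    · intro t _ ht
      rw [Finsupp.single_eq_of_ne' (Ne.symm ht), pow_zero]
    · simp

lemma abs_cc (a : Fin n) (l : List (Fin n)) :
    ‖cc q a (deg l)‖
      = (l.map fun s => if s < a then ‖q a s‖ else 1).prod := by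
  unfold cc
  rw [norm_prod]
  rw [← prod_pow_deg (fun s => if s < a then ‖q a s‖ else 1) l]
  congr 1
  funext t
  rw [norm_pow]
  congr 1
  split_ifs <;> simp

lemma lam_sq (hq : MultAntisym n q) (l : List (Fin n)) :
    (‖Lam q l‖) ^ 2 = GG q l * SS q l := by
  induction l with
  | nil => simp [Lam, GG, SS]
  | cons a t ih =>
    show ‖cc q a (deg t) * Lam q t‖ ^ 2 = _
    rw [norm_mul, mul_pow, ih, abs_cc]
    show _ = (t.map (aQ q a)).prod * GG q t * ((t.map (mm q a)).prod * SS q t)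
    rw [listprod_pow _ 2]
    have : (t.map fun s => (if s < a then ‖q a s‖ else 1) ^ 2).prod
        = (t.map (aQ q a)).prod * (t.map (mm q a)).prod := by
      rw [listprod_mul]
      have hfn : (fun s => (if s < a then ‖q a s‖ else 1) ^ 2)
          = fun s => aQ q a s * mm q a s := by
        funext s
        unfold aQ mm
        rcases lt_trichotomy s a with h | h | h
        · rw [if_pos h, if_neg (by rintro rfl; exact lt_irrefl _ h), if_pos h]; ring
        · subst h; simp
        · rw [if_neg (lt_asymm h), if_neg (by rintro rfl; exact lt_irrefl _ h),
            if_neg (lt_asymm h), if_pos h]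
          have h2 : ‖q s a‖ * ‖q a s‖ = 1 := by
            rw [← norm_mul, show q s a * q a s = 1 from hq.2 a s]
            simp
          nlinarith [h2]
      rw [hfn]
    rw [this]
    ring

lemma GG_append (x y : List (Fin n)) : GG q (x ++ y) = GG q x * GG q y * EE q x y := by
  induction x with
  | nil => simp [GG, EE]
  | cons a t ih =>
    show ((t ++ y).map (aQ q a)).prod * GG q (t ++ y)
        = GG q (a :: t) * GG q y * EE q (a :: t) y
    rw [ih, List.map_append, List.prod_append]
    show _ = (t.map (aQ q a)).prod * GG q t * GG q y
        * (((y.map (aQ q a)).prod) * EE q t y)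
    unfold EE
    ring

lemma EE_append_right (x y z : List (Fin n)) : EE q x (y ++ z) = EE q x y * EE q x z := by
  unfold EE
  rw [listprod_mul]
  have hfn : (fun a => ((y ++ z).map (aQ q a)).prod)
      = fun a => (y.map (aQ q a)).prod * (z.map (aQ q a)).prod := by
    funext a; rw [List.map_append, List.prod_append]
  rw [hfn]

lemma EE_append_left (x y z : List (Fin n)) : EE q (x ++ y) z = EE q x z * EE q y z := by
  unfold EE
  rw [List.map_append, List.prod_append]

lemma EE_replicate_left (c : ℕ) (j : Fin n) (y : List (Fin n)) :
    EE q (List.replicate c j) y = ((y.map (aQ q j)).prod) ^ c := by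
  unfold EE
  rw [List.map_replicate, List.prod_replicate]

lemma EE_replicate_right (c : ℕ) (j : Fin n) (y : List (Fin n)) :
    EE q y (List.replicate c j) = ((y.map fun s => aQ q s j).prod) ^ c := by
  unfold EE
  rw [listprod_pow]
  have hfn : (fun a => ((List.replicate c j).map (aQ q a)).prod)
      = fun a => aQ q a j ^ c := by
    funext a; rw [List.map_replicate, List.prod_replicate]
  rw [hfn]

lemma GG_replicate (c : ℕ) (j : Fin n) : GG q (List.replicate c j) = 1 := by
  induction c with
  | zero => rfl
  | succ c ih =>
    show (List.map (aQ q j) (List.replicate c j)).prod * GG q (List.replicate c j) = 1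
    rw [ih, List.map_replicate, List.prod_replicate]
    simp [aQ]

lemma GG_pos (hq : MultAntisym n q) (l : List (Fin n)) : 0 < GG q l := by
  induction l with
  | nil => norm_num [GG]
  | cons a t ih =>
    refine mul_pos (List.prod_pos ?_) ih
    intro x hx
    obtain ⟨s, _, rfl⟩ := List.mem_map.1 hx
    exact aQ_pos hq a s

end Real

section Count

variable {j x : Fin n}

lemma cb_cons (j a : Fin n) (l : List (Fin n)) :
    countBlocks j (a :: l)
      = (if a = j ∧ l.head? ≠ some j then 1 else 0) + countBlocks j l := by
  cases l with
  | nil => simp [countBlocks]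
  | cons b t =>
    show (if a = j ∧ b ≠ j then 1 else 0) + _ = _
    congr 2
    simp

lemma cb_append (j : Fin n) : ∀ x y : List (Fin n),
    countBlocks j (x ++ y)
      + (if x.getLast? = some j ∧ y.head? = some j then 1 else 0)
      = countBlocks j x + countBlocks j y := by
  intro x
  induction x with
  | nil => intro y; simp [countBlocks]
  | cons a t IH =>
    intro y
    cases t with
    | nil =>
      rw [List.singleton_append, cb_cons]
      show _ = (if a = j then 1 else 0) + _
      by_cases h1 : a = j <;> by_cases h2 : y.head? = some j <;>
        simp [h1, h2] <;> omega
    | cons b t' =>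
      have h4 := IH y
      simp only [List.cons_append] at h4 ⊢
      rw [cb_cons j a (b :: (t' ++ y)), cb_cons j a (b :: t'), List.getLast?_cons_cons]
      simp only [List.head?_cons]
      by_cases hab : a = j <;> by_cases hbj : b = j <;>
        by_cases hy : y.head? = some j <;> by_cases hgl : (b :: t').getLast? = some j <;>
          simp [hab, hbj, hy, hgl] at h4 ⊢ <;> omega

lemma cb_not_mem {l : List (Fin n)} (h : j ∉ l) : countBlocks j l = 0 := by
  induction l with
  | nil => rfl
  | cons a t ih =>
    simp only [List.mem_cons, not_or] at h
    rw [cb_cons, ih h.2]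
    simp [Ne.symm h.1]

lemma cb_replicate (c : ℕ) (j x : Fin n) :
    countBlocks x (List.replicate c j) = if c ≠ 0 ∧ j = x then 1 else 0 := by
  induction c with
  | zero => simp [countBlocks]
  | succ c ih =>
    rw [List.replicate_succ, cb_cons, ih]
    cases c with
    | zero => simp
    | succ c =>
      simp only [List.head?_replicate]
      by_cases h : j = x <;> simp [h]

lemma head?_append_left {x : List (Fin n)} (h : x ≠ []) (y : List (Fin n)) :
    (x ++ y).head? = x.head? := by
  cases x with
  | nil => exact absurd rfl h
  | cons a t => rfl

lemma mem_of_getLast?_eq {l : List (Fin n)} (h : l.getLast? = some x) : x ∈ l := by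
  have : x ∈ l.getLast? := h ▸ rfl
  obtain ⟨hne, rfl⟩ := List.mem_getLast?_eq_getLast this
  exact List.getLast_mem hne

lemma exists_first_block (j : Fin n) : ∀ l : List (Fin n), j ∈ l →
    ∃ u a w', l = u ++ (List.replicate a j ++ w') ∧ 1 ≤ a ∧ j ∉ u ∧ w'.head? ≠ some j := by
  intro l
  induction l with
  | nil => intro h; exact absurd h (List.not_mem_nil)
  | cons c t IH =>
    intro hmem
    by_cases hc : c = j
    · subst hc
      by_cases hh : t.head? = some c
      · have hmt : c ∈ t := by
          cases t with
          | nil => simp at hh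
          | cons d t' =>
            simp only [List.head?_cons, Option.some_inj] at hh
            exact hh ▸ List.mem_cons_self
        obtain ⟨u, a, w', hdec, ha, hu, hw⟩ := IH hmt
        have hu0 : u = [] := by
          cases u with
          | nil => rfl
          | cons e u' =>
            exfalso
            rw [hdec] at hh
            simp only [List.cons_append, List.head?_cons, Option.some_inj] at hh
            exact hu (hh ▸ List.mem_cons_self)
        subst hu0
        refine ⟨[], a + 1, w', ?_, by omega, by simp, hw⟩
        simp only [List.nil_append] at hdec ⊢
        rw [List.replicate_succ, List.cons_append, hdec]
      · exact ⟨[], 1, t, by simp [List.replicate_succ], le_refl 1, by simp, hh⟩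
    · have hmt : j ∈ t := by
        rcases List.mem_cons.1 hmem with h | h
        · exact absurd h.symm hc
        · exact h
      obtain ⟨u, a, w', hdec, ha, hu, hw⟩ := IH hmt
      refine ⟨c :: u, a, w', by rw [List.cons_append, hdec], ha, ?_, hw⟩
      simp only [List.mem_cons, not_or]
      exact ⟨fun h => hc h.symm, hu⟩

lemma cb_block_split {u w' : List (Fin n)} {a : ℕ} (hu : j ∉ u) (ha : 1 ≤ a)
    (hw : w'.head? ≠ some j) :
    countBlocks j (u ++ (List.replicate a j ++ w')) = 1 + countBlocks j w' := by
  have h1 := cb_append j u (List.replicate a j ++ w')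
  have h2 := cb_append j (List.replicate a j) w'
  have hu0 : countBlocks j u = 0 := cb_not_mem hu
  have hul : ¬ (u.getLast? = some j) := fun h => hu (mem_of_getLast?_eq h)
  have hrl : (List.replicate a j).getLast? = some j := by
    cases a with
    | zero => omega
    | succ a => rw [List.replicate_succ', List.getLast?_concat]
  have hrc : countBlocks j (List.replicate a j) = 1 := by
    rw [cb_replicate]; simp [Nat.one_le_iff_ne_zero.1 ha]
  rw [hrl] at h2
  simp only [hul, false_and, if_false, add_zero, hu0, hrc] at h1 h2
  simp only [hw, and_false, if_false, add_zero] at h2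
  omega

lemma exists_two_blocks (j : Fin n) (l : List (Fin n))
    (h : 2 ≤ countBlocks j l) :
    ∃ u a v b w', l = u ++ (List.replicate a j ++ (v ++ (List.replicate b j ++ w')))
      ∧ 1 ≤ a ∧ 1 ≤ b ∧ v ≠ [] ∧ j ∉ v ∧ w'.head? ≠ some j := by
  have hmem : j ∈ l := by
    by_contra hm
    rw [cb_not_mem hm] at h
    omega
  obtain ⟨u, a, w1, hdec, ha, hu, hw1⟩ := exists_first_block j l hmem
  have hcount : countBlocks j l = 1 + countBlocks j w1 := by
    rw [hdec]; exact cb_block_split hu ha hw1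
  have hmem2 : j ∈ w1 := by
    by_contra hm
    rw [cb_not_mem hm] at hcount
    omega
  obtain ⟨v, b, w', hdec2, hb, hv, hw'⟩ := exists_first_block j w1 hmem2
  have hvne : v ≠ [] := by
    intro hv0
    subst hv0
    rw [hdec2] at hw1
    simp only [List.nil_append] at hw1
    apply hw1
    rw [head?_append_left]
    · cases b with
      | zero => omega
      | succ b => rw [List.replicate_succ]; rfl
    · cases b with
      | zero => omega
      | succ b => simp [List.replicate_succ]
  exact ⟨u, a, v, b, w', by rw [hdec, hdec2], ha, hb, hvne, hv, hw'⟩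

end Count

section Realize

lemma exists_word {m : ℕ} (α : Fin m → Fin n) (l : List (Fin n))
    (h : l.Perm (List.ofFn α)) :
    ∃ σ : Equiv.Perm (Fin m), List.ofFn (α ∘ σ.symm) = l := by
  have hlen : l.length = m := by
    rw [h.length_eq, List.length_ofFn]
  set g : Fin m → Fin n := fun i => l.get (Fin.cast hlen.symm i) with hg
  have hofg : List.ofFn g = l := by
    apply List.ext_get
    · simp [hlen]
    · intro i h1 h2
      simp [hg]
  have hperm : (List.ofFn g).Perm (List.ofFn α) := hofg ▸ h
  -- sorted versions agree
  have h1 : List.ofFn (g ∘ Tuple.sort g) = List.ofFn (α ∘ Tuple.sort α) :=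
    (((Equiv.Perm.ofFn_comp_perm (Tuple.sort g) g).trans hperm).trans
        (Equiv.Perm.ofFn_comp_perm (Tuple.sort α) α).symm).eq_of_pairwise'
      ((Tuple.monotone_sort g).sortedLE_ofFn.pairwise) ((Tuple.monotone_sort α).sortedLE_ofFn.pairwise)
  have h2 : g ∘ Tuple.sort g = α ∘ Tuple.sort α := List.ofFn_injective h1
  refine ⟨((Tuple.sort g).symm.trans (Tuple.sort α)).symm, ?_⟩
  rw [← hofg]
  congr 1
  funext i
  simp only [Equiv.symm_symm, Equiv.trans_apply, Function.comp_apply]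
  have := congrFun h2 ((Tuple.sort g).symm i)
  simp only [Function.comp_apply, Equiv.apply_symm_apply] at this
  exact this.symm

end Realize

section Move

variable {q : Fin n → Fin n → ℂ}

lemma aQ_self (q : Fin n → Fin n → ℂ) (j : Fin n) : aQ q j j = 1 := by simp [aQ]

lemma prod_aQ_pair (hq : MultAntisym n q) (v : List (Fin n)) (j : Fin n) :
    (v.map (aQ q j)).prod * (v.map fun s => aQ q s j).prod = 1 := by
  rw [listprod_mul]
  have hfn : (fun s => aQ q j s * aQ q s j) = fun _ : Fin n => (1:ℝ) := by
    funext s; exact aQ_mul hq j s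
  rw [hfn]
  simp

lemma prod_aQ_pos (hq : MultAntisym n q) (v : List (Fin n)) (j : Fin n) :
    0 < (v.map (aQ q j)).prod := by
  apply List.prod_pos
  intro x hx
  obtain ⟨s, _, rfl⟩ := List.mem_map.1 hx
  exact aQ_pos hq j s

lemma prod_aQ_pos' (hq : MultAntisym n q) (v : List (Fin n)) (j : Fin n) :
    0 < (v.map fun s => aQ q s j).prod := by
  apply List.prod_pos
  intro x hx
  obtain ⟨s, _, rfl⟩ := List.mem_map.1 hx
  exact aQ_pos hq s j

lemma GG_move_left (hq : MultAntisym n q) (u v w' : List (Fin n)) (j : Fin n) (a b : ℕ) :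
    GG q (u ++ (List.replicate (a+b) j ++ (v ++ w')))
      = ((v.map (aQ q j)).prod) ^ (2*b)
        * GG q (u ++ (List.replicate a j ++ (v ++ (List.replicate b j ++ w')))) := by
  have hA := prod_aQ_pair hq v j
  have hApos := prod_aQ_pos hq v j
  have h2 : (v.map fun s => aQ q s j).prod = ((v.map (aQ q j)).prod)⁻¹ := by
    field_simp
    linear_combination hA
  simp only [GG_append, GG_replicate, EE_append_right, EE_replicate_left, EE_replicate_right,
    List.map_append, List.prod_append, List.map_replicate, List.prod_replicate, aQ_self,
    one_pow, one_mul, mul_one, h2]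
  simp only [inv_pow]
  field_simp
  ring

lemma GG_move_right (hq : MultAntisym n q) (u v w' : List (Fin n)) (j : Fin n) (a b : ℕ) :
    GG q (u ++ (v ++ (List.replicate (a+b) j ++ w')))
      = ((v.map fun s => aQ q s j).prod) ^ (2*a)
        * GG q (u ++ (List.replicate a j ++ (v ++ (List.replicate b j ++ w')))) := by
  have hA := prod_aQ_pair hq v j
  have hApos := prod_aQ_pos hq v j
  have h2 : (v.map fun s => aQ q s j).prod = ((v.map (aQ q j)).prod)⁻¹ := by
    field_simp
    linear_combination hA
  simp only [GG_append, GG_replicate, EE_append_right, EE_replicate_left, EE_replicate_right,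
    List.map_append, List.prod_append, List.map_replicate, List.prod_replicate, aQ_self,
    one_pow, one_mul, mul_one, h2]
  simp only [inv_pow]
  field_simp
  ring

lemma F_of_GG (hq : MultAntisym n q) {l1 l2 : List (Fin n)} (hperm : l1.Perm l2) (c : ℝ)
    (hc : 0 < c) (hG : GG q l1 = c ^ 2 * GG q l2) :
    ‖Lam q l1‖ = c * ‖Lam q l2‖ := by
  have h1 := lam_sq hq l1
  have h2 := lam_sq hq l2
  have hS := SS_perm (q := q) hperm
  have hsq : (‖Lam q l1‖) ^ 2 = (c * ‖Lam q l2‖) ^ 2 := by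
    rw [h1, hG, hS, mul_pow, h2]
    ring
  exact (sq_eq_sq₀ (norm_nonneg _) (by positivity)).1 hsq

end Move

section CountMain

variable {j j' : Fin n}

lemma head?_mem {v : List (Fin n)} {x : Fin n} (h : v.head? = some x) : x ∈ v := by
  cases v with
  | nil => simp at h
  | cons a t =>
    simp only [List.head?_cons, Option.some_inj] at h
    exact h ▸ List.mem_cons_self

lemma head?_replicate_pos {c : ℕ} (hc : 1 ≤ c) (j : Fin n) :
    (List.replicate c j).head? = some j := by
  rw [List.head?_replicate]
  simp [Nat.one_le_iff_ne_zero.1 hc]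

lemma getLast?_replicate_pos {c : ℕ} (hc : 1 ≤ c) (j : Fin n) :
    (List.replicate c j).getLast? = some j := by
  cases c with
  | zero => omega
  | succ c => rw [List.replicate_succ', List.getLast?_concat]

lemma replicate_ne_nil {c : ℕ} (hc : 1 ≤ c) (j : Fin n) : List.replicate c j ≠ [] := by
  cases c with
  | zero => omega
  | succ c => simp [List.replicate_succ]

lemma cb_count_main (j : Fin n) (u v w' : List (Fin n)) (a b : ℕ)
    (ha : 1 ≤ a) (hb : 1 ≤ b) (hv : v ≠ []) (hjv : j ∉ v) (hw : w'.head? ≠ some j) :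
    countBlocks j (u ++ (List.replicate (a+b) j ++ (v ++ w'))) + 1
      = countBlocks j (u ++ (List.replicate a j ++ (v ++ (List.replicate b j ++ w')))) := by
  have hhv : v.head? ≠ some j := fun h => hjv (head?_mem h)
  have hglv : v.getLast? ≠ some j := fun h => hjv (mem_of_getLast?_eq h)
  have hhX : (List.replicate a j ++ (v ++ (List.replicate b j ++ w'))).head? = some j := by
    rw [head?_append_left (replicate_ne_nil ha j), head?_replicate_pos ha]
  have hhY : (List.replicate (a+b) j ++ (v ++ w')).head? = some j := by
    rw [head?_append_left (replicate_ne_nil (by omega) j), head?_replicate_pos (by omega)]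
  have h1 := cb_append j u (List.replicate a j ++ (v ++ (List.replicate b j ++ w')))
  have h2 := cb_append j u (List.replicate (a+b) j ++ (v ++ w'))
  rw [hhX] at h1
  rw [hhY] at h2
  -- interior of X
  have hx1 := cb_append j (List.replicate a j) (v ++ (List.replicate b j ++ w'))
  rw [head?_append_left hv, cb_replicate] at hx1
  simp [hhv, Nat.one_le_iff_ne_zero.1 ha] at hx1
  have hx2 := cb_append j v (List.replicate b j ++ w')
  rw [cb_not_mem hjv] at hx2
  simp [hglv] at hx2
  have hx3 := cb_append j (List.replicate b j) w'
  rw [cb_replicate, getLast?_replicate_pos hb] at hx3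
  simp [hw, Nat.one_le_iff_ne_zero.1 hb] at hx3
  -- interior of Y
  have hy1 := cb_append j (List.replicate (a+b) j) (v ++ w')
  rw [head?_append_left hv, cb_replicate] at hy1
  simp [hhv, show b ≠ 0 by omega] at hy1
  have hy2 := cb_append j v w'
  rw [cb_not_mem hjv] at hy2
  simp [hglv] at hy2
  by_cases hgu : u.getLast? = some j <;> simp [hgu] at h1 h2 <;> omega

lemma cb_count_other (j j' : Fin n) (hne : j' ≠ j) (u v w' : List (Fin n)) (a b : ℕ)
    (ha : 1 ≤ a) (hb : 1 ≤ b) (hv : v ≠ []) (hjv : j ∉ v) (hw : w'.head? ≠ some j) :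
    countBlocks j' (u ++ (List.replicate (a+b) j ++ (v ++ w')))
      ≤ countBlocks j' (u ++ (List.replicate a j ++ (v ++ (List.replicate b j ++ w')))) := by
  have hsome : (some j : Option (Fin n)) ≠ some j' := by
    simp [Ne.symm hne]
  have hhX : (List.replicate a j ++ (v ++ (List.replicate b j ++ w'))).head? = some j := by
    rw [head?_append_left (replicate_ne_nil ha j), head?_replicate_pos ha]
  have hhY : (List.replicate (a+b) j ++ (v ++ w')).head? = some j := by
    rw [head?_append_left (replicate_ne_nil (by omega) j), head?_replicate_pos (by omega)]
  have h1 := cb_append j' u (List.replicate a j ++ (v ++ (List.replicate b j ++ w')))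
  have h2 := cb_append j' u (List.replicate (a+b) j ++ (v ++ w'))
  rw [hhX] at h1
  rw [hhY] at h2
  simp [hsome] at h1 h2
  -- interior of X
  have hx1 := cb_append j' (List.replicate a j) (v ++ (List.replicate b j ++ w'))
  rw [cb_replicate, getLast?_replicate_pos ha] at hx1
  simp [hsome, Ne.symm hne] at hx1
  have hx2 := cb_append j' v (List.replicate b j ++ w')
  rw [head?_append_left (replicate_ne_nil hb j), head?_replicate_pos hb] at hx2
  simp [hsome] at hx2
  have hx3 := cb_append j' (List.replicate b j) w'
  rw [cb_replicate, getLast?_replicate_pos hb] at hx3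
  simp [hsome, Ne.symm hne] at hx3
  -- interior of Y
  have hy1 := cb_append j' (List.replicate (a+b) j) (v ++ w')
  rw [cb_replicate, getLast?_replicate_pos (show 1 ≤ a + b by omega)] at hy1
  simp [hsome, Ne.symm hne] at hy1
  have hy2 := cb_append j' v w'
  omega

end CountMain

lemma permAct_mul {m : ℕ} (σ σ' : Equiv.Perm (Fin m)) (α : Fin m → Fin n) :
    permAct σ (permAct σ' α) = permAct (σ * σ') α := rfl

end CS

theorem compactification_step (n : ℕ) (q : Fin n → Fin n → ℂ) (hq : MultAntisym n q)
    (k : Fin n → ℕ) (m : ℕ) (α : Fin m → Fin n) (hα : IsSortedWord k α)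
    -- `L σ` is the scalar `λ(σ, δ(k))`:
    (L : Equiv.Perm (Fin m) → ℂ)
    (hL : ∀ σ, xWord q α = L σ • xWord q (permAct σ α))
    -- `w = w_q(k)`:
    (w : ℝ) (hw : IsLeast {r | ∃ σ, r = ‖L σ‖} w)
    -- `α' = τ·δ(k)` is an element of `W(k)`:
    (τ : Equiv.Perm (Fin m)) (hτ : ‖L τ‖ = w)
    -- the letter `j` has at least two maximal nonempty blocks in `α'`:
    (j : Fin n) (hj : 2 ≤ countBlocks j (List.ofFn (permAct τ α))) :
    ∃ σ : Equiv.Perm (Fin m),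
      (permAct σ (permAct τ α) ∈
        {β | ∃ σ', β = permAct σ' α ∧ ‖L σ'‖ = w}) ∧
      countBlocks j (List.ofFn (permAct σ (permAct τ α))) =
        countBlocks j (List.ofFn (permAct τ α)) - 1 ∧
      ∀ j' : Fin n, countBlocks j' (List.ofFn (permAct τ α)) ≤ 1 →
        countBlocks j' (List.ofFn (permAct σ (permAct τ α))) ≤ 1 := by
  classical
  obtain ⟨u, a, v, b, w', hdec, ha, hb, hvne, hjv, hw'⟩ :=
    CS.exists_two_blocks j (List.ofFn (permAct τ α)) hj
  have hβ1perm : (u ++ (List.replicate (a+b) j ++ (v ++ w'))).Perm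
      (List.ofFn (permAct τ α)) := by
    rw [hdec, List.replicate_add]
    refine List.Perm.append_left u ?_
    rw [List.append_assoc]
    exact List.Perm.append_left _ (List.perm_append_comm_assoc _ _ _)
  have hβ2perm : (u ++ (v ++ (List.replicate (a+b) j ++ w'))).Perm
      (List.ofFn (permAct τ α)) := by
    rw [hdec, List.replicate_add]
    refine List.Perm.append_left u ?_
    rw [List.append_assoc]
    exact List.perm_append_comm_assoc v _ _
  have hlperm : (List.ofFn (permAct τ α)).Perm (List.ofFn α) :=
    Equiv.Perm.ofFn_comp_perm τ.symm α
  obtain ⟨σ1, hσ1⟩ := CS.exists_word α _ (hβ1perm.trans hlperm)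
  obtain ⟨σ2, hσ2⟩ := CS.exists_word α _ (hβ2perm.trans hlperm)
  have hdegp : ∀ σ : Equiv.Perm (Fin m),
      CS.deg (List.ofFn (permAct σ α)) = CS.deg (List.ofFn α) :=
    fun σ => CS.deg_perm (Equiv.Perm.ofFn_comp_perm σ.symm α)
  have habs : ∀ σ : Equiv.Perm (Fin m),
      ‖CS.Lam q (List.ofFn α)‖
        = ‖L σ‖ * ‖CS.Lam q (List.ofFn (permAct σ α))‖ := by
    intro σ
    have h := CS.lam_det hq α (permAct σ α) (L σ) (hdegp σ) (hL σ)
    rw [h, norm_mul]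
  have hFpos : ∀ lst : List (Fin n), 0 < ‖CS.Lam q lst‖ :=
    fun lst => norm_pos_iff.2 (CS.Lam_ne_zero hq lst)
  have hmin : ∀ σ : Equiv.Perm (Fin m), w ≤ ‖L σ‖ := fun σ => hw.2 ⟨σ, rfl⟩
  have hwF : ‖CS.Lam q (List.ofFn α)‖
      = w * ‖CS.Lam q (List.ofFn (permAct τ α))‖ := by
    have h := habs τ
    rw [hτ] at h
    exact h
  have hwpos : 0 < w := by
    by_contra hcon
    push_neg at hcon
    have h0 := hFpos (List.ofFn α)
    rw [hwF] at h0
    nlinarith [hFpos (List.ofFn (permAct τ α))]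
  have hA1pos := CS.prod_aQ_pos hq v j
  have hA2pos := CS.prod_aQ_pos' hq v j
  have hGb1 : CS.GG q (u ++ (List.replicate (a+b) j ++ (v ++ w')))
      = (((v.map (CS.aQ q j)).prod) ^ b) ^ 2 * CS.GG q (List.ofFn (permAct τ α)) := by
    rw [hdec, CS.GG_move_left hq u v w' j a b, ← pow_mul, mul_comm 2 b]
  have hGb2 : CS.GG q (u ++ (v ++ (List.replicate (a+b) j ++ w')))
      = (((v.map fun s => CS.aQ q s j).prod) ^ a) ^ 2
        * CS.GG q (List.ofFn (permAct τ α)) := by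
    rw [hdec, CS.GG_move_right hq u v w' j a b, ← pow_mul, mul_comm 2 a]
  have hFb1 := CS.F_of_GG hq hβ1perm _ (pow_pos hA1pos b) hGb1
  have hFb2 := CS.F_of_GG hq hβ2perm _ (pow_pos hA2pos a) hGb2
  have hLσ1 : ‖CS.Lam q (List.ofFn α)‖
      = ‖L σ1‖
        * ‖CS.Lam q (u ++ (List.replicate (a+b) j ++ (v ++ w')))‖ := by
    have h := habs σ1
    rw [show List.ofFn (permAct σ1 α) = u ++ (List.replicate (a+b) j ++ (v ++ w'))
      from hσ1] at h
    exact h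
  have hLσ2 : ‖CS.Lam q (List.ofFn α)‖
      = ‖L σ2‖
        * ‖CS.Lam q (u ++ (v ++ (List.replicate (a+b) j ++ w')))‖ := by
    have h := habs σ2
    rw [show List.ofFn (permAct σ2 α) = u ++ (v ++ (List.replicate (a+b) j ++ w'))
      from hσ2] at h
    exact h
  have e1 : w = ‖L σ1‖ * ((v.map (CS.aQ q j)).prod) ^ b := by
    apply mul_right_cancel₀ (ne_of_gt (hFpos (List.ofFn (permAct τ α))))
    rw [← hwF, hLσ1, hFb1]
    ring
  have e2 : w = ‖L σ2‖ * ((v.map fun s => CS.aQ q s j).prod) ^ a := by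
    apply mul_right_cancel₀ (ne_of_gt (hFpos (List.ofFn (permAct τ α))))
    rw [← hwF, hLσ2, hFb2]
    ring
  have hle1 : ((v.map (CS.aQ q j)).prod) ^ b ≤ 1 := by
    nlinarith [hmin σ1, pow_pos hA1pos b]
  have hle2 : ((v.map fun s => CS.aQ q s j).prod) ^ a ≤ 1 := by
    nlinarith [hmin σ2, pow_pos hA2pos a]
  have hA12 : (v.map (CS.aQ q j)).prod * (v.map fun s => CS.aQ q s j).prod = 1 :=
    CS.prod_aQ_pair hq v j
  have hA1le := (pow_le_one_iff_of_nonneg (le_of_lt hA1pos) (by omega)).1 hle1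
  have hA2le := (pow_le_one_iff_of_nonneg (le_of_lt hA2pos) (by omega)).1 hle2
  have hA1eq : (v.map (CS.aQ q j)).prod = 1 := by nlinarith
  have hLval : ‖L σ1‖ = w := by
    rw [hA1eq, one_pow, mul_one] at e1
    exact e1.symm
  have hofn : List.ofFn (permAct (σ1 * τ⁻¹) (permAct τ α))
      = u ++ (List.replicate (a+b) j ++ (v ++ w')) := by
    rw [CS.permAct_mul, inv_mul_cancel_right]
    exact hσ1
  refine ⟨σ1 * τ⁻¹, ⟨σ1, ?_, hLval⟩, ?_, ?_⟩
  · rw [CS.permAct_mul, inv_mul_cancel_right]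
  · rw [hofn, hdec]
    have h := CS.cb_count_main j u v w' a b ha hb hvne hjv hw'
    omega
  · intro j' hj'
    by_cases hjj : j' = j
    · subst hjj
      omega
    · have h := CS.cb_count_other j j' hjj u v w' a b ha hb hvne hjv hw'
      rw [hofn]
      rw [hdec] at hj'
      omega
end
end

section
/- Let q = (q_ij) be a multiplicatively antisymmetric n×n matrix. If |q_ij| ≤ 1 whenever i < j, then the weight function satisfies w_q(k) = ∏_{i<j} |q_ij|^{k_i k_j} for all k ∈ ℤ₊ⁿ; if |q_ij| ≥ 1 whenever i < j, then w_q(k) = 1 for all k ∈ ℤ₊ⁿ. -/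
/- STATEMENT 6: if |q_ij| ≤ 1 for i < j then w_q(k) = ∏_{i<j} |q_ij|^{k_i k_j}; if |q_ij| ≥ 1 for i < j then w_q(k) = 1. -/

/- STATEMENT 0: the cocycle identity λ(στ, α) = λ(σ, τ·α) · λ(τ, α) for the scalars
defined by x_α = λ(σ,α) x_{σ·α} in the quantum affine space algebra. -/

noncomputable section

/-- The set `{ |λ(σ, δ(k))| : σ ∈ S_{|k|} }`, whose minimum is the weight `w_q(k)`. -/
def wSet {n : ℕ} (q : Fin n → Fin n → ℂ) (k : Fin n → ℕ) : Set ℝ :=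
  {r | ∃ (σ : Equiv.Perm (Fin (∑ i, k i))) (lam : ℂ) (α : Fin (∑ i, k i) → Fin n),
    IsSortedWord k α ∧ xWord q α = lam • xWord q (permAct σ α) ∧ r = ‖lam‖}

namespace WFaux

variable {n : ℕ}

def bump (a : Fin n) (k : Fin n → ℕ) : Fin n → ℕ := fun j => k j + if j = a then 1 else 0

def cnt (L : List (Fin n)) : Fin n → ℕ := fun j => L.count j

lemma cnt_nil : cnt ([] : List (Fin n)) = 0 := by
  funext j; simp [cnt]

lemma cnt_cons (a : Fin n) (L : List (Fin n)) : cnt (a :: L) = bump a (cnt L) := by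
  funext j; by_cases h : j = a <;> simp [cnt, bump, List.count_cons, h] <;> exact Ne.symm h

lemma bump_comm (a b : Fin n) (m : Fin n → ℕ) : bump a (bump b m) = bump b (bump a m) := by
  funext j; simp [bump]; ring

variable (q : Fin n → Fin n → ℂ)

lemma q_ne (hq : MultAntisym n q) (i j : Fin n) : q i j ≠ 0 :=
  right_ne_zero_of_mul_eq_one (hq.2 i j)

def cc (a : Fin n) (m : Fin n → ℕ) : ℂ := ∏ j, if j < a then q a j ^ m j else 1

lemma cc_ne (hq : MultAntisym n q) (a : Fin n) (m : Fin n → ℕ) : cc q a m ≠ 0 := by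
  rw [cc, Finset.prod_ne_zero_iff]
  intro j _
  split
  · exact pow_ne_zero _ (q_ne q hq a j)
  · exact one_ne_zero

lemma cc_bump (a b : Fin n) (m : Fin n → ℕ) :
    cc q a (bump b m) = cc q a m * (if b < a then q a b else 1) := by
  rw [cc, cc]
  have : ∀ j : Fin n, (if j < a then q a j ^ (bump b m j) else 1)
      = (if j < a then q a j ^ m j else 1) * (if j = b then (if j < a then q a j else 1) else 1) := by
    intro j
    by_cases h2 : j = b
    · subst h2
      by_cases h1 : j < a <;> simp [bump, h1, pow_succ]
    · by_cases h1 : j < a <;> simp [bump, h1, h2]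
  rw [Finset.prod_congr rfl fun j _ => this j, Finset.prod_mul_distrib,
    Finset.prod_ite_eq' Finset.univ b fun j => (if j < a then q a j else 1)]
  simp

lemma cc_key (hq : MultAntisym n q) (i j : Fin n) (m : Fin n → ℕ) :
    cc q j m * cc q i (bump j m) = q i j * (cc q i m * cc q j (bump i m)) := by
  rw [cc_bump, cc_bump]
  rcases lt_trichotomy i j with h | h | h
  · rw [if_neg (asymm h), if_pos h, mul_one]
    have h1 : q i j * q j i = 1 := hq.2 j i
    calc cc q j m * cc q i m = (q i j * q j i) * (cc q i m * cc q j m) := by rw [h1]; ring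
    _ = q i j * (cc q i m * (cc q j m * q j i)) := by ring
  · subst h
    simp [hq.1 i]
  · rw [if_pos h, if_neg (asymm h), mul_one]
    ring



variable {n : ℕ} (q : Fin n → Fin n → ℂ)

def scal : List (Fin n) → ℂ
  | [] => 1
  | a :: L => cc q a (cnt L) * scal L

lemma scal_cons (a : Fin n) (L : List (Fin n)) :
    scal q (a :: L) = cc q a (cnt L) * scal q L := rfl

lemma scal_ne (hq : MultAntisym n q) (L : List (Fin n)) : scal q L ≠ 0 := by
  induction L with
  | nil => exact one_ne_zero
  | cons a L ih => exact mul_ne_zero (cc_ne q hq a _) ih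

abbrev V (n : ℕ) := (Fin n → ℕ) →₀ ℂ

def T (a : Fin n) : V n →ₗ[ℂ] V n :=
  Finsupp.lsum ℂ fun m => cc q a m • Finsupp.lsingle (bump a m)

lemma T_single (a : Fin n) (m : Fin n → ℕ) (x : ℂ) :
    T q a (Finsupp.single m x) = cc q a m • Finsupp.single (bump a m) x := by
  simp [T]

lemma T_comm (hq : MultAntisym n q) (i j : Fin n) :
    T q i ∘ₗ T q j = q i j • (T q j ∘ₗ T q i) := by
  apply Finsupp.lhom_ext
  intro m x
  simp only [LinearMap.comp_apply, LinearMap.smul_apply, T_single, map_smul, smul_smul]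
  rw [bump_comm, cc_key q hq i j m]

def phi (hq : MultAntisym n q) : RingQuot (QRel n q) →ₐ[ℂ] Module.End ℂ (V n) :=
  RingQuot.liftAlgHom ℂ ⟨FreeAlgebra.lift ℂ fun i => T q i, by
    rintro x y ⟨i, j, rfl, rfl⟩
    simp only [map_mul, map_smul, FreeAlgebra.lift_ι_apply]
    rw [Module.End.mul_eq_comp, Module.End.mul_eq_comp]
    exact T_comm q hq i j⟩

lemma phi_gen (hq : MultAntisym n q) (i : Fin n) : phi q hq (qGen q i) = T q i := by
  rw [qGen, phi, RingQuot.liftAlgHom_mkAlgHom_apply, FreeAlgebra.lift_ι_apply]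

def prodX (L : List (Fin n)) : RingQuot (QRel n q) := (L.map (qGen q)).prod

lemma prodX_cons (a : Fin n) (L : List (Fin n)) :
    prodX q (a :: L) = qGen q a * prodX q L := by
  simp [prodX]

lemma phi_prodX (hq : MultAntisym n q) (L : List (Fin n)) :
    phi q hq (prodX q L) (Finsupp.single 0 1) = scal q L • Finsupp.single (cnt L) (1 : ℂ) := by
  induction L with
  | nil =>
      rw [cnt_nil]
      simp [prodX, scal]
  | cons a L ih =>
      rw [prodX_cons, map_mul, Module.End.mul_apply, ih, map_smul, phi_gen q hq a, T_single,
        smul_smul, cnt_cons, scal_cons, mul_comm (scal q L)]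

lemma qGen_rel (i j : Fin n) :
    qGen q i * qGen q j = q i j • (qGen q j * qGen q i) := by
  rw [qGen, qGen, ← map_mul, ← map_mul, ← map_smul]
  exact RingQuot.mkAlgHom_rel ℂ ⟨i, j, rfl, rfl⟩

lemma exists_lam (hq : MultAntisym n q) {L L' : List (Fin n)} (h : L.Perm L') :
    ∃ lam : ℂ, lam ≠ 0 ∧ prodX q L = lam • prodX q L' := by
  induction h with
  | nil => exact ⟨1, one_ne_zero, by simp⟩
  | cons x h ih =>
      obtain ⟨lam, h0, hl⟩ := ih
      exact ⟨lam, h0, by rw [prodX_cons, prodX_cons, hl, mul_smul_comm]⟩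
  | swap x y l =>
      refine ⟨q y x, q_ne q hq y x, ?_⟩
      rw [prodX_cons, prodX_cons, prodX_cons, prodX_cons, ← mul_assoc, ← mul_assoc,
        qGen_rel q y x, smul_mul_assoc]
  | trans h1 h2 ih1 ih2 =>
      obtain ⟨l1, h1n, e1⟩ := ih1
      obtain ⟨l2, h2n, e2⟩ := ih2
      exact ⟨l1 * l2, mul_ne_zero h1n h2n, by rw [e1, e2, smul_smul]⟩




variable {n : ℕ} (q : Fin n → Fin n → ℂ)

lemma scal_eq (hq : MultAntisym n q) {d : ℕ} (α β : Fin d → Fin n) (lam : ℂ)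
    (h : xWord q α = lam • xWord q β) (hc : cnt (List.ofFn β) = cnt (List.ofFn α)) :
    scal q (List.ofFn α) = lam * scal q (List.ofFn β) := by
  have h2 : phi q hq (prodX q (List.ofFn α)) = lam • phi q hq (prodX q (List.ofFn β)) := by
    rw [← map_smul]
    exact congrArg (phi q hq) h
  have h3 := LinearMap.congr_fun h2 (Finsupp.single 0 1)
  rw [phi_prodX q hq, LinearMap.smul_apply, phi_prodX q hq, hc, smul_smul,
    Finsupp.smul_single, Finsupp.smul_single, smul_eq_mul, smul_eq_mul, mul_one, mul_one] at h3
  exact Finsupp.single_injective _ h3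

lemma cnt_zero_of_not_mem {L : List (Fin n)} {j : Fin n} (h : j ∉ L) : cnt L j = 0 :=
  List.count_eq_zero.2 h

lemma scal_sorted (L : List (Fin n)) (h : List.Pairwise (· ≤ ·) L) : scal q L = 1 := by
  induction L with
  | nil => rfl
  | cons a L ih =>
      rw [List.pairwise_cons] at h
      have hc : cc q a (cnt L) = 1 := Finset.prod_eq_one fun j _ => by
        by_cases hj : j < a
        · have hm : j ∉ L := fun hm => absurd (h.1 j hm) (not_le.2 hj)
          simp [hj, cnt_zero_of_not_mem hm]
        · simp [hj]
      rw [scal_cons, hc, one_mul]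
      exact ih h.2

lemma abs_pair (hq : MultAntisym n q) (i j : Fin n) :
    ‖q i j‖ * ‖q j i‖ = 1 := by
  rw [← norm_mul, hq.2 j i, norm_one]

def G (k : Fin n → ℕ) : ℝ :=
  ∏ i, ∏ j, if i < j then ‖q i j‖ ^ (k i * k j) else 1

def AA (k : Fin n → ℕ) (a : Fin n) : ℝ := ∏ i, if i < a then ‖q i a‖ ^ k i else 1

def BB (k : Fin n → ℕ) (a : Fin n) : ℝ := ∏ j, if a < j then ‖q a j‖ ^ k j else 1

lemma G_pos (hq : MultAntisym n q) (k : Fin n → ℕ) : 0 < G q k := by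
  apply Finset.prod_pos
  intro i _
  apply Finset.prod_pos
  intro j _
  split
  · exact pow_pos (norm_pos_iff.mpr (q_ne q hq i j)) _
  · exact one_pos

lemma G_bump (k : Fin n → ℕ) (a : Fin n) :
    G q (bump a k) = G q k * AA q k a * BB q k a := by
  rw [G, G, AA, BB]
  have step : ∀ i j : Fin n,
      (if i < j then ‖q i j‖ ^ (bump a k i * bump a k j) else 1)
      = ((if i < j then ‖q i j‖ ^ (k i * k j) else 1)
          * (if j = a then (if i < a then ‖q i a‖ ^ k i else 1) else 1))
        * (if i = a then (if a < j then ‖q a j‖ ^ k j else 1) else 1) := by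
    intro i j
    by_cases h1 : i < j
    · by_cases h2 : i = a
      · subst h2
        have h3 : j ≠ i := (ne_of_gt h1)
        have hbi : bump i k i = k i + 1 := by simp [bump]
        have hbj : bump i k j = k j := by simp [bump, h3]
        rw [if_pos h1, if_pos h1, if_neg h3, mul_one, if_pos rfl, if_pos h1,
          hbi, hbj, add_mul, one_mul, pow_add]
      · by_cases h3 : j = a
        · subst h3
          have hbi : bump j k i = k i := by simp [bump, h2]
          have hbj : bump j k j = k j + 1 := by simp [bump]
          rw [if_pos h1, if_pos h1, if_pos rfl, if_pos h1, if_neg h2, mul_one,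
            hbi, hbj, mul_add, mul_one, pow_add]
        · have hbi : bump a k i = k i := by simp [bump, h2]
          have hbj : bump a k j = k j := by simp [bump, h3]
          rw [hbi, hbj, if_neg h3, if_neg h2, mul_one, mul_one]
    · rw [if_neg h1, if_neg h1]
      have e2 : (if j = a then (if i < a then ‖q i a‖ ^ k i else 1) else 1) = 1 := by
        by_cases h3 : j = a
        · subst h3
          rw [if_pos rfl, if_neg h1]
        · rw [if_neg h3]
      have e3 : (if i = a then (if a < j then ‖q a j‖ ^ k j else 1) else 1) = 1 := by
        by_cases h2 : i = a
        · subst h2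
          rw [if_pos rfl, if_neg h1]
        · rw [if_neg h2]
      rw [e2, e3, mul_one, mul_one]
  rw [Finset.prod_congr rfl fun i _ => Finset.prod_congr rfl fun j _ => step i j]
  have e1 : ∀ i : Fin n, ∏ j, (((if i < j then ‖q i j‖ ^ (k i * k j) else 1)
          * (if j = a then (if i < a then ‖q i a‖ ^ k i else 1) else 1))
        * (if i = a then (if a < j then ‖q a j‖ ^ k j else 1) else 1))
      = ((∏ j, if i < j then ‖q i j‖ ^ (k i * k j) else 1)
          * (if i < a then ‖q i a‖ ^ k i else 1))
        * (if i = a then (∏ j, if a < j then ‖q a j‖ ^ k j else 1) else 1) := by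
    intro i
    rw [Finset.prod_mul_distrib, Finset.prod_mul_distrib,
      Finset.prod_ite_eq' Finset.univ a fun _ => (if i < a then ‖q i a‖ ^ k i else 1)]
    simp only [Finset.mem_univ, if_pos]
    congr 1
    split
    · rfl
    · exact Finset.prod_const_one
  rw [Finset.prod_congr rfl fun i _ => e1 i, Finset.prod_mul_distrib, Finset.prod_mul_distrib,
    Finset.prod_ite_eq' Finset.univ a
      fun _ => (∏ j, if a < j then ‖q a j‖ ^ k j else 1)]
  simp only [Finset.mem_univ, if_pos]


lemma abs_cc_mul_AA (hq : MultAntisym n q) (a : Fin n) (m : Fin n → ℕ) :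
    ‖cc q a m‖ * AA q m a = 1 := by
  rw [cc, AA, norm_prod, ← Finset.prod_mul_distrib]
  apply Finset.prod_eq_one
  intro j _
  by_cases hj : j < a
  · rw [if_pos hj, if_pos hj, norm_pow, ← mul_pow, abs_pair q hq a j, one_pow]
  · simp [hj]

lemma AA_nonneg (m : Fin n → ℕ) (a : Fin n) : 0 ≤ AA q m a := by
  apply Finset.prod_nonneg
  intro j _
  split
  · positivity
  · exact zero_le_one

lemma BB_nonneg (m : Fin n → ℕ) (a : Fin n) : 0 ≤ BB q m a := by
  apply Finset.prod_nonneg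
  intro j _
  split
  · positivity
  · exact zero_le_one

lemma G_nil : G q (cnt ([] : List (Fin n))) = 1 := by
  rw [cnt_nil, G]
  apply Finset.prod_eq_one
  intro i _
  apply Finset.prod_eq_one
  intro j _
  split <;> simp

lemma bound_le (hq : MultAntisym n q) (hle : ∀ i j, i < j → ‖q i j‖ ≤ 1)
    (L : List (Fin n)) : ‖scal q L‖ * G q (cnt L) ≤ 1 := by
  induction L with
  | nil => simp [G_nil, scal]
  | cons a L ih =>
      have hBB : BB q (cnt L) a ≤ 1 := by
        apply Finset.prod_le_one
        · intro j _
          split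
          · positivity
          · exact zero_le_one
        · intro j _
          split
          · next h => exact pow_le_one₀ (norm_nonneg _) (hle a j h)
          · exact le_refl 1
      rw [cnt_cons, G_bump, scal_cons, norm_mul]
      calc ‖cc q a (cnt L)‖ * ‖scal q L‖
            * (G q (cnt L) * AA q (cnt L) a * BB q (cnt L) a)
          = (‖cc q a (cnt L)‖ * AA q (cnt L) a)
            * ((‖scal q L‖ * G q (cnt L)) * BB q (cnt L) a) := by ring
        _ = (‖scal q L‖ * G q (cnt L)) * BB q (cnt L) a := by
            rw [abs_cc_mul_AA q hq, one_mul]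
        _ ≤ 1 * 1 := by
            apply mul_le_mul ih hBB (BB_nonneg q _ _) zero_le_one
        _ = 1 := mul_one 1

lemma abs_le_one_of (hq : MultAntisym n q) {a j : Fin n} (h : 1 ≤ ‖q j a‖) :
    ‖q a j‖ ≤ 1 := by
  have h2 := abs_pair q hq a j
  nlinarith [norm_nonneg (q a j)]

lemma bound_ge (hq : MultAntisym n q) (hge : ∀ i j, i < j → 1 ≤ ‖q i j‖)
    (L : List (Fin n)) : ‖scal q L‖ ≤ 1 := by
  induction L with
  | nil => simp [scal]
  | cons a L ih =>
      rw [scal_cons, norm_mul]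
      have hcc : ‖cc q a (cnt L)‖ ≤ 1 := by
        rw [cc, norm_prod]
        apply Finset.prod_le_one
        · intro j _
          positivity
        · intro j _
          by_cases hj : j < a
          · rw [if_pos hj, norm_pow]
            exact pow_le_one₀ (norm_nonneg _) (abs_le_one_of q hq (hge j a hj))
          · simp [hj]
      exact mul_le_one₀ hcc (norm_nonneg _) ih

lemma desc_eq (hq : MultAntisym n q) (L : List (Fin n))
    (h : List.Pairwise (fun a b => b ≤ a) L) :
    ‖scal q L‖ * G q (cnt L) = 1 := by
  induction L with
  | nil => simp [G_nil, scal]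
  | cons a L ih =>
      rw [List.pairwise_cons] at h
      have hBB : BB q (cnt L) a = 1 := by
        apply Finset.prod_eq_one
        intro j _
        by_cases hj : a < j
        · have hm : j ∉ L := fun hm => absurd (h.1 j hm) (not_le.2 hj)
          simp [hj, cnt_zero_of_not_mem hm]
        · simp [hj]
      rw [cnt_cons, G_bump, scal_cons, norm_mul]
      calc ‖cc q a (cnt L)‖ * ‖scal q L‖
            * (G q (cnt L) * AA q (cnt L) a * BB q (cnt L) a)
          = (‖cc q a (cnt L)‖ * AA q (cnt L) a)
            * ((‖scal q L‖ * G q (cnt L)) * BB q (cnt L) a) := by ring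
        _ = 1 := by
            rw [abs_cc_mul_AA q hq, ih h.2, hBB]
            norm_num

def sortedList (k : Fin n → ℕ) : List (Fin n) :=
  (List.ofFn fun i : Fin n => List.replicate (k i) i).flatten

lemma sortedList_sorted (k : Fin n → ℕ) : List.Pairwise (· ≤ ·) (sortedList k) := by
  rw [sortedList, List.pairwise_flatten]
  constructor
  · intro l hl
    rw [List.mem_ofFn] at hl
    obtain ⟨i, rfl⟩ := hl
    exact List.pairwise_replicate.2 (Or.inr le_rfl)
  · rw [List.pairwise_ofFn]
    intro i j hij x hx y hy
    rw [List.eq_of_mem_replicate hx, List.eq_of_mem_replicate hy]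
    exact hij.le

lemma cnt_sortedList (k : Fin n → ℕ) : cnt (sortedList k) = k := by
  funext j
  rw [cnt, sortedList, List.count_flatten, List.map_ofFn, List.sum_ofFn]
  have : ∀ i : Fin n, ((List.count j) ∘ fun i : Fin n => List.replicate (k i) i) i
      = if i = j then k i else 0 := by
    intro i
    simp [List.count_replicate]
  rw [Finset.sum_congr rfl fun i _ => this i, Finset.sum_ite_eq' Finset.univ j k]
  simp

lemma sortedList_length (k : Fin n → ℕ) : (sortedList k).length = ∑ i, k i := by
  simp [sortedList, List.length_flatten, List.map_ofFn, List.sum_ofFn, Function.comp_def]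

def alphaW (k : Fin n → ℕ) : Fin (∑ i, k i) → Fin n :=
  fun t => (sortedList k).get (Fin.cast (sortedList_length k).symm t)

lemma ofFn_alphaW (k : Fin n → ℕ) : List.ofFn (alphaW k) = sortedList k := by
  apply List.ext_getElem
  · simp [sortedList_length]
  · intro i h1 h2
    simp [alphaW, List.getElem_ofFn]

lemma ofFn_comp_rev {d : ℕ} (α : Fin d → Fin n) :
    List.ofFn (fun t => α t.rev) = (List.ofFn α).reverse := by
  apply List.ext_getElem
  · simp
  · intro i h1 h2
    rw [List.length_ofFn] at h1
    rw [List.getElem_reverse, List.getElem_ofFn, List.getElem_ofFn]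
    congr 1
    ext
    simp [Fin.rev]
    omega

lemma perm_ofFn_comp {d : ℕ} (α : Fin d → Fin n) (e : Equiv.Perm (Fin d)) :
    (List.ofFn (α ∘ e)).Perm (List.ofFn α) := by
  rw [List.ofFn_eq_map, List.ofFn_eq_map, ← List.map_map]
  apply List.Perm.map
  apply (List.perm_ext_iff_of_nodup
    (List.Nodup.map e.injective (List.nodup_finRange d)) (List.nodup_finRange d)).2
  intro a
  constructor
  · intro _
    exact List.mem_finRange a
  · intro _
    rw [List.mem_map]
    exact ⟨e.symm a, List.mem_finRange _, by simp⟩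

lemma permAct_def {n d : ℕ} (σ : Equiv.Perm (Fin d)) (α : Fin d → Fin n) :
    permAct σ α = α ∘ ⇑σ.symm := rfl

lemma xWord_eq {n d : ℕ} (q : Fin n → Fin n → ℂ) (α : Fin d → Fin n) :
    xWord q α = prodX q (List.ofFn α) := rfl

lemma mem_wSet_struct {n : ℕ} (q : Fin n → Fin n → ℂ) (hq : MultAntisym n q)
    {k : Fin n → ℕ} {r : ℝ} (hr : r ∈ wSet q k) :
    ∃ L' : List (Fin n), cnt L' = k ∧ ‖scal q L'‖ * r = 1 := by
  obtain ⟨σ, lam, α, hsort, heq, rfl⟩ := hr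
  have hofn : List.ofFn α = sortedList k := hsort
  have hc : cnt (List.ofFn (permAct σ α)) = cnt (List.ofFn α) := by
    funext j
    exact (perm_ofFn_comp α σ.symm).count_eq j
  have h1 := scal_eq q hq α (permAct σ α) lam heq hc
  rw [hofn, scal_sorted q _ (sortedList_sorted k)] at h1
  refine ⟨List.ofFn (permAct σ α), ?_, ?_⟩
  · rw [hc, hofn, cnt_sortedList]
  · have h2 := congrArg norm h1
    rw [norm_one, norm_mul] at h2
    rw [mul_comm]
    exact h2.symm

end WFaux

theorem weight_formula (n : ℕ) (q : Fin n → Fin n → ℂ) (hq : MultAntisym n q)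
    (w : (Fin n → ℕ) → ℝ) (hw : ∀ k, IsLeast (wSet q k) (w k)) :
    ((∀ i j, i < j → ‖q i j‖ ≤ 1) →
      ∀ k : Fin n → ℕ,
        w k = ∏ p ∈ Finset.univ.filter (fun p : Fin n × Fin n => p.1 < p.2),
          ‖q p.1 p.2‖ ^ (k p.1 * k p.2)) ∧
    ((∀ i j, i < j → 1 ≤ ‖q i j‖) → ∀ k : Fin n → ℕ, w k = 1) := by
  constructor
  · intro hle k
    have hG : IsLeast (wSet q k) (WFaux.G q k) := by
      constructor
      · obtain ⟨lam, hlam0, hlameq⟩ :=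
          WFaux.exists_lam q hq ((List.reverse_perm (List.ofFn (WFaux.alphaW k))).symm)
        have e : List.ofFn (permAct Fin.revPerm (WFaux.alphaW k))
            = (List.ofFn (WFaux.alphaW k)).reverse := by
          rw [WFaux.permAct_def, Fin.revPerm_symm, ← WFaux.ofFn_comp_rev]
          congr 1
        have heq : xWord q (WFaux.alphaW k) = lam • xWord q (permAct Fin.revPerm (WFaux.alphaW k)) := by
          rw [WFaux.xWord_eq, WFaux.xWord_eq, e]
          exact hlameq
        refine ⟨Fin.revPerm, lam, WFaux.alphaW k, WFaux.ofFn_alphaW k, heq, ?_⟩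
        have hc : WFaux.cnt (List.ofFn (permAct Fin.revPerm (WFaux.alphaW k)))
            = WFaux.cnt (List.ofFn (WFaux.alphaW k)) := by
          funext j
          exact ((WFaux.perm_ofFn_comp (WFaux.alphaW k) Fin.revPerm.symm).count_eq j)
        have h1 := WFaux.scal_eq q hq (WFaux.alphaW k) _ lam heq hc
        rw [WFaux.ofFn_alphaW, WFaux.scal_sorted q _ (WFaux.sortedList_sorted k)] at h1
        have hdesc := WFaux.desc_eq q hq (List.ofFn (permAct Fin.revPerm (WFaux.alphaW k)))
          (by
            rw [e, WFaux.ofFn_alphaW]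
            exact List.pairwise_reverse.2 (WFaux.sortedList_sorted k))
        rw [hc, WFaux.ofFn_alphaW, WFaux.cnt_sortedList] at hdesc
        have habs := congrArg norm h1
        rw [norm_one, norm_mul] at habs
        have hpos : 0 < ‖WFaux.scal q (List.ofFn (permAct Fin.revPerm (WFaux.alphaW k)))‖ :=
          norm_pos_iff.mpr (WFaux.scal_ne q hq _)
        nlinarith [WFaux.G_pos q hq k]
      · intro r hr
        obtain ⟨L', hcnt, habs⟩ := WFaux.mem_wSet_struct q hq hr
        have h2 := WFaux.bound_le q hq hle L'
        rw [hcnt] at h2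
        have hpos : 0 < ‖WFaux.scal q L'‖ :=
          norm_pos_iff.mpr (WFaux.scal_ne q hq L')
        nlinarith [WFaux.G_pos q hq k]
    rw [(hw k).unique hG, Finset.prod_filter, Fintype.prod_prod_type]
    rfl
  · intro hge k
    have h1 : IsLeast (wSet q k) 1 := by
      constructor
      · exact ⟨1, 1, WFaux.alphaW k, WFaux.ofFn_alphaW k, by simp [permAct]; rfl,
          norm_one.symm⟩
      · intro r hr
        obtain ⟨L', hcnt, habs⟩ := WFaux.mem_wSet_struct q hq hr
        have h2 := WFaux.bound_ge q hq hge L'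
        have hpos : 0 < ‖WFaux.scal q L'‖ :=
          norm_pos_iff.mpr (WFaux.scal_ne q hq L')
        nlinarith
    exact (hw k).unique h1
end
end

section
/- In the single-parameter case where q_ij = q for all i < j (q ∈ ℂˣ), the weight function is w_q(k) = 1 if |q| ≥ 1, and w_q(k) = |q|^{∑_{i<j} k_i k_j} if |q| < 1, for all k ∈ ℤ₊ⁿ. -/
/- STATEMENT 7: single-parameter case q_ij = q (i<j): w_q(k) = 1 if |q| ≥ 1 and w_q(k) = |q|^{∑_{i<j} k_i k_j} if |q| < 1. -/

/- STATEMENT 0: the cocycle identity λ(στ, α) = λ(σ, τ·α) · λ(τ, α) for the scalars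
defined by x_α = λ(σ,α) x_{σ·α} in the quantum affine space algebra. -/

noncomputable section

namespace AuxW

variable {n : ℕ}

/-! ### combinatorics of words -/

def ev (a : Fin n) : Fin n → ℕ := Pi.single a 1

def dl : List (Fin n) → (Fin n → ℕ)
  | [] => 0
  | a :: T => dl T + ev a

def sUp (a : Fin n) (v : Fin n → ℕ) : ℕ :=
  ∑ j ∈ Finset.univ.filter (fun j => a < j), v j

def sDn (a : Fin n) (v : Fin n → ℕ) : ℕ :=
  ∑ j ∈ Finset.univ.filter (fun j => j < a), v j

def cnt : List (Fin n) → ℕ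
  | [] => 0
  | a :: T => cnt T + sUp a (dl T)

def cntd : List (Fin n) → ℕ
  | [] => 0
  | a :: T => cntd T + sDn a (dl T)

def Dm (v : Fin n → ℕ) : ℕ := ∑ i, v i * sUp i v

lemma sUp_add (i : Fin n) (v w : Fin n → ℕ) : sUp i (v + w) = sUp i v + sUp i w := by
  simp [sUp, Finset.sum_add_distrib]

lemma sUp_ev (i a : Fin n) : sUp i (ev a) = if i < a then 1 else 0 := by
  unfold sUp ev
  rw [Finset.sum_pi_single']
  simp

lemma Dm_step (v : Fin n → ℕ) (a : Fin n) : Dm (v + ev a) = Dm v + sUp a v + sDn a v := by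
  have pt : ∀ i, (v + ev a) i * sUp i (v + ev a)
      = v i * sUp i v + ((if i = a then sUp a v else 0) + (if i < a then v i else 0)) := by
    intro i
    rw [sUp_add, sUp_ev]
    by_cases h : i = a
    · subst h
      simp [ev, lt_irrefl]
      ring
    · have h0 : ev a i = 0 := by simp [ev, Pi.single_apply, h]
      simp only [Pi.add_apply, h0, add_zero, if_neg h, zero_add]
      rw [mul_add]
      congr 1
      by_cases h2 : i < a <;> simp [h2]
  unfold Dm
  rw [Finset.sum_congr rfl (fun i _ => pt i), Finset.sum_add_distrib, Finset.sum_add_distrib]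
  have e1 : (∑ i : Fin n, if i = a then sUp a v else 0) = sUp a v := by simp
  have e2 : (∑ i : Fin n, if i < a then v i else 0) = sDn a v := by
    rw [sDn, Finset.sum_filter]
  rw [e1, e2]
  ring

lemma cnt_add_cntd (L : List (Fin n)) : cnt L + cntd L = Dm (dl L) := by
  induction L with
  | nil => simp [cnt, cntd, dl, Dm, sUp]
  | cons a T ih =>
      show cnt T + sUp a (dl T) + (cntd T + sDn a (dl T)) = Dm (dl T + ev a)
      rw [Dm_step]
      omega

lemma dl_count (L : List (Fin n)) (j : Fin n) : dl L j = L.count j := by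
  induction L with
  | nil => simp [dl]
  | cons a T ih =>
      show dl T j + ev a j = _
      rw [List.count_cons, ih]
      by_cases h : a = j
      · subst h; simp [ev]
      · simp [ev, Pi.single_apply, h, Ne.symm h]

lemma sUp_dl_eq_zero {a : Fin n} {T : List (Fin n)} (h : ∀ b ∈ T, b ≤ a) :
    sUp a (dl T) = 0 := by
  refine Finset.sum_eq_zero fun j hj => ?_
  rw [dl_count]
  rw [Finset.mem_filter] at hj
  rw [List.count_eq_zero]
  intro hmem
  exact absurd (h j hmem) (not_le.mpr hj.2)

lemma sDn_dl_eq_zero {a : Fin n} {T : List (Fin n)} (h : ∀ b ∈ T, a ≤ b) :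
    sDn a (dl T) = 0 := by
  refine Finset.sum_eq_zero fun j hj => ?_
  rw [dl_count]
  rw [Finset.mem_filter] at hj
  rw [List.count_eq_zero]
  intro hmem
  exact absurd (h j hmem) (not_le.mpr hj.2)

lemma cnt_of_desc {L : List (Fin n)} (h : L.Pairwise (fun x y => y ≤ x)) : cnt L = 0 := by
  induction L with
  | nil => rfl
  | cons a T ih =>
      rw [List.pairwise_cons] at h
      show cnt T + sUp a (dl T) = 0
      rw [ih h.2, sUp_dl_eq_zero h.1]

lemma cntd_of_asc {L : List (Fin n)} (h : L.Pairwise (· ≤ ·)) : cntd L = 0 := by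
  induction L with
  | nil => rfl
  | cons a T ih =>
      rw [List.pairwise_cons] at h
      show cntd T + sDn a (dl T) = 0
      rw [ih h.2, sDn_dl_eq_zero h.1]

/-! ### the sorted word -/

def sortedList (k : Fin n → ℕ) : List (Fin n) :=
  (List.ofFn fun i : Fin n => List.replicate (k i) i).flatten

lemma sortedList_length (k : Fin n → ℕ) : (sortedList k).length = ∑ i, k i := by
  simp [sortedList, Function.comp_def, List.sum_ofFn]

lemma sortedList_sorted (k : Fin n → ℕ) : (sortedList k).Pairwise (· ≤ ·) := by
  rw [sortedList, List.pairwise_flatten]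
  constructor
  · intro l hl
    rw [List.mem_ofFn] at hl
    obtain ⟨i, rfl⟩ := hl
    rw [List.pairwise_replicate]
    right; exact le_refl _
  · rw [List.pairwise_ofFn]
    intro i j hij x hx y hy
    rw [List.eq_of_mem_replicate hx, List.eq_of_mem_replicate hy]
    exact le_of_lt hij

lemma dl_sortedList (k : Fin n → ℕ) : dl (sortedList k) = k := by
  funext j
  rw [dl_count, sortedList, List.count_flatten, List.map_ofFn]
  rw [List.sum_ofFn]
  have : ∀ i : Fin n, (List.count j ∘ fun i : Fin n => List.replicate (k i) i) i
      = if i = j then k i else 0 := by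
    intro i
    simp [List.count_replicate]
  rw [Finset.sum_congr rfl (fun i _ => this i)]
  simp

def sortedWord (k : Fin n → ℕ) : Fin (∑ i, k i) → Fin n :=
  fun p => (sortedList k).get (Fin.cast (sortedList_length k).symm p)

lemma ofFn_sortedWord (k : Fin n → ℕ) : List.ofFn (sortedWord k) = sortedList k := by
  apply List.ext_getElem
  · simp [sortedList_length]
  · intro i h1 h2
    simp [sortedWord]

lemma isSortedWord_sortedWord (k : Fin n → ℕ) : IsSortedWord k (sortedWord k) :=
  ofFn_sortedWord k

lemma ofFn_isSorted {k : Fin n → ℕ} {α : Fin (∑ i, k i) → Fin n} (h : IsSortedWord k α) :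
    List.ofFn α = sortedList k := h

lemma dl_ofFn {d : ℕ} (f : Fin d → Fin n) : dl (List.ofFn f) = ∑ p, ev (f p) := by
  induction d with
  | zero => simp [dl]
  | succ m ih =>
      rw [List.ofFn_succ]
      show dl (List.ofFn (f ∘ Fin.succ)) + ev (f 0) = _
      rw [ih, Fin.sum_univ_succ]
      exact add_comm _ _

lemma dl_permAct {d : ℕ} (σ : Equiv.Perm (Fin d)) (α : Fin d → Fin n) :
    dl (List.ofFn (permAct σ α)) = dl (List.ofFn α) := by
  rw [dl_ofFn, dl_ofFn]
  exact Equiv.sum_comp σ.symm (fun p => ev (α p))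

lemma dl_reverse (L : List (Fin n)) : dl L.reverse = dl L := by
  funext j; rw [dl_count, dl_count, List.count_reverse]

lemma ofFn_rev {d : ℕ} (α : Fin d → Fin n) :
    List.ofFn (fun i => α (Fin.rev i)) = (List.ofFn α).reverse := by
  apply List.ext_getElem
  · simp
  · intro i h1 h2
    simp only [List.getElem_ofFn, List.getElem_reverse, List.getElem_ofFn]
    congr 1
    simp only [List.length_ofFn] at h1 h2 ⊢
    ext
    simp [Fin.rev]
    omega

/-! ### algebra lemmas -/

variable (q : Fin n → Fin n → ℂ)

def P (L : List (Fin n)) : RingQuot (QRel n q) := (L.map (qGen q)).prod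

lemma P_nil : P q ([] : List (Fin n)) = 1 := rfl

lemma P_cons (a : Fin n) (T : List (Fin n)) : P q (a :: T) = qGen q a * P q T := by
  simp [P]

lemma P_append (L1 L2 : List (Fin n)) : P q (L1 ++ L2) = P q L1 * P q L2 := by
  simp [P]

lemma xWord_eq_P {d : ℕ} (α : Fin d → Fin n) : xWord q α = P q (List.ofFn α) := rfl

lemma gen_rel (i j : Fin n) :
    qGen q i * qGen q j = q i j • (qGen q j * qGen q i) := by
  have h : QRel n q (FreeAlgebra.ι ℂ i * FreeAlgebra.ι ℂ j)
      (q i j • (FreeAlgebra.ι ℂ j * FreeAlgebra.ι ℂ i)) := ⟨i, j, rfl, rfl⟩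
  have := RingQuot.mkAlgHom_rel ℂ h
  simpa [qGen, map_mul, map_smul] using this

lemma gen_mul_P (a : Fin n) (L : List (Fin n)) :
    ∃ c : ℂ, qGen q a * P q L = c • (P q L * qGen q a) := by
  induction L with
  | nil => exact ⟨1, by simp [P_nil]⟩
  | cons b T ih =>
      obtain ⟨c, hc⟩ := ih
      refine ⟨q a b * c, ?_⟩
      rw [P_cons, ← mul_assoc, gen_rel q a b, smul_mul_assoc, mul_assoc, hc,
        mul_smul_comm, mul_assoc, ← smul_smul]

lemma P_reverse (L : List (Fin n)) : ∃ c : ℂ, P q L = c • P q L.reverse := by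
  induction L with
  | nil => exact ⟨1, by simp⟩
  | cons a T ih =>
      obtain ⟨c, hc⟩ := ih
      obtain ⟨c', hc'⟩ := gen_mul_P q a T.reverse
      refine ⟨c * c', ?_⟩
      rw [P_cons, hc, mul_smul_comm, hc', List.reverse_cons, P_append, smul_smul]
      simp [P]

/-! ### the representation -/

abbrev V (n : ℕ) := (Fin n → ℕ) →₀ ℂ

def Top (q0 : ℂ) (a : Fin n) : Module.End ℂ (V n) :=
  Finsupp.lsum ℂ fun v => (q0 ^ sUp a v) • (Finsupp.lsingle (v + ev a) : ℂ →ₗ[ℂ] V n)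

lemma Top_single (q0 : ℂ) (a : Fin n) (v : Fin n → ℕ) (c : ℂ) :
    Top q0 a (Finsupp.single v c) = (q0 ^ sUp a v) • Finsupp.single (v + ev a) c := by
  rw [Top, Finsupp.lsum_single]
  simp

variable (q0 : ℂ)

lemma Top_rel (hq0 : q0 ≠ 0)
    (hq : ∀ i j : Fin n, q i j = if i < j then q0 else if j < i then q0⁻¹ else 1)
    (i j : Fin n) :
    Top q0 i * Top q0 j = q i j • (Top q0 j * Top q0 i) := by
  apply Finsupp.lhom_ext
  intro v c
  simp only [LinearMap.smul_apply, Module.End.mul_apply]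
  rw [Top_single, map_smul, Top_single, Top_single, map_smul, Top_single]
  rw [sUp_add, sUp_add, sUp_ev, sUp_ev]
  rw [smul_smul, smul_smul, smul_smul]
  have hadd : v + ev j + ev i = v + ev i + ev j := by
    funext x; simp [ev]; ring
  rw [hadd]
  congr 1
  rw [hq i j]
  rcases lt_trichotomy i j with h | h | h
  · simp only [if_pos h, if_neg (lt_asymm h), if_neg (not_lt.mpr h.le)]
    rw [pow_add, pow_add, pow_one, pow_zero]
    ring
  · subst h
    simp [lt_irrefl]
  · simp only [if_pos h, if_neg (lt_asymm h), if_neg (not_lt.mpr h.le)]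
    rw [pow_add, pow_add, pow_one, pow_zero]
    field_simp

def phi (hq0 : q0 ≠ 0)
    (hq : ∀ i j : Fin n, q i j = if i < j then q0 else if j < i then q0⁻¹ else 1) :
    RingQuot (QRel n q) →ₐ[ℂ] Module.End ℂ (V n) :=
  RingQuot.liftAlgHom ℂ ⟨FreeAlgebra.lift ℂ (Top q0), by
    rintro x y ⟨i, j, rfl, rfl⟩
    rw [map_mul, map_smul, map_mul]
    simp only [FreeAlgebra.lift_ι_apply]
    exact Top_rel q q0 hq0 hq i j⟩

variable (hq0 : q0 ≠ 0)
  (hq : ∀ i j : Fin n, q i j = if i < j then q0 else if j < i then q0⁻¹ else 1)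

lemma phi_gen (a : Fin n) : phi q q0 hq0 hq (qGen q a) = Top q0 a := by
  rw [qGen, phi, RingQuot.liftAlgHom_mkAlgHom_apply]
  simp [FreeAlgebra.lift_ι_apply]

lemma phi_P (L : List (Fin n)) :
    phi q q0 hq0 hq (P q L) (Finsupp.single 0 1)
      = (q0 ^ cnt L) • Finsupp.single (dl L) 1 := by
  induction L with
  | nil => simp [P_nil, cnt, dl]
  | cons a T ih =>
      rw [P_cons, map_mul, Module.End.mul_apply, ih, map_smul, phi_gen, Top_single]
      rw [smul_smul, ← pow_add]
      rfl

lemma coeff_eq (hq0 : q0 ≠ 0)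
    (hq : ∀ i j : Fin n, q i j = if i < j then q0 else if j < i then q0⁻¹ else 1)
    {A B : List (Fin n)} {lam : ℂ} (hAB : P q A = lam • P q B)
    (hdl : dl A = dl B) : q0 ^ cnt A = lam * q0 ^ cnt B := by
  have := congrArg (fun x => phi q q0 hq0 hq x (Finsupp.single 0 1)) hAB
  simp only [map_smul, LinearMap.smul_apply] at this
  rw [phi_P, phi_P] at this
  rw [← hdl] at this
  have h2 := congrArg (fun f : V n => f (dl A)) this
  simpa [Finsupp.smul_apply, Finsupp.single_eq_same, smul_eq_mul] using h2


lemma Dm_pairs (v : Fin n → ℕ) :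
    Dm v = ∑ p ∈ Finset.univ.filter (fun p : Fin n × Fin n => p.1 < p.2), v p.1 * v p.2 := by
  rw [Finset.sum_filter, Fintype.sum_prod_type]
  unfold Dm sUp
  refine Finset.sum_congr rfl fun i _ => ?_
  rw [Finset.mul_sum, Finset.sum_filter]

lemma one_mem (k : Fin n → ℕ) : (1 : ℝ) ∈ wSet q k := by
  have hact : permAct (1 : Equiv.Perm (Fin (∑ i, k i))) (sortedWord k) = sortedWord k := by
    funext i; simp [permAct]; rfl
  exact ⟨1, 1, sortedWord k, isSortedWord_sortedWord k,
    by rw [one_smul, hact], by simp⟩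

lemma cnt_sortedList (k : Fin n → ℕ) : cnt (sortedList k) = Dm k := by
  have h1 := cnt_add_cntd (sortedList k)
  rw [cntd_of_asc (sortedList_sorted k), dl_sortedList] at h1
  omega

lemma min_mem (hq0 : q0 ≠ 0)
    (hq : ∀ i j : Fin n, q i j = if i < j then q0 else if j < i then q0⁻¹ else 1)
    (k : Fin n → ℕ) : (‖q0‖ ^ Dm k : ℝ) ∈ wSet q k := by
  obtain ⟨c, hc⟩ := P_reverse q (sortedList k)
  have hperm : permAct (Fin.revPerm) (sortedWord k) = fun i => sortedWord k (Fin.rev i) := by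
    funext i; simp [permAct, Fin.revPerm_symm]
  refine ⟨Fin.revPerm, c, sortedWord k, isSortedWord_sortedWord k, ?_, ?_⟩
  · rw [xWord_eq_P, xWord_eq_P, hperm, ofFn_rev, ofFn_sortedWord]
    exact hc
  · have hrevdesc : (sortedList k).reverse.Pairwise (fun x y : Fin n => y ≤ x) :=
      List.pairwise_reverse.mpr (sortedList_sorted k)
    have hdl : dl (sortedList k) = dl (sortedList k).reverse := (dl_reverse _).symm
    have hco := coeff_eq q q0 hq0 hq hc hdl
    rw [cnt_of_desc hrevdesc, pow_zero, mul_one, cnt_sortedList] at hco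
    rw [← hco, norm_pow]

lemma abs_lam_eq (hq0 : q0 ≠ 0)
    (hq : ∀ i j : Fin n, q i j = if i < j then q0 else if j < i then q0⁻¹ else 1)
    {k : Fin n → ℕ} {σ : Equiv.Perm (Fin (∑ i, k i))} {lam : ℂ}
    {α : Fin (∑ i, k i) → Fin n} (hα : IsSortedWord k α)
    (heq : xWord q α = lam • xWord q (permAct σ α)) :
    ∃ c ≤ Dm k, ‖lam‖ = ‖q0‖ ^ (Dm k - c) := by
  have hA : List.ofFn α = sortedList k := hα
  have hdl : dl (List.ofFn α) = dl (List.ofFn (permAct σ α)) := (dl_permAct σ α).symm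
  have hco := coeff_eq q q0 hq0 hq
    (A := List.ofFn α) (B := List.ofFn (permAct σ α)) heq hdl
  have hcntA : cnt (List.ofFn α) = Dm k := by rw [hA, cnt_sortedList]
  have hle : cnt (List.ofFn (permAct σ α)) ≤ Dm k := by
    have h2 := cnt_add_cntd (List.ofFn (permAct σ α))
    have h3 : dl (List.ofFn (permAct σ α)) = k := by
      rw [dl_permAct, hA, dl_sortedList]
    rw [h3] at h2
    omega
  refine ⟨cnt (List.ofFn (permAct σ α)), hle, ?_⟩
  have habs := congrArg (‖·‖) hco
  rw [norm_mul, norm_pow, norm_pow, hcntA] at habs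
  have hane : ‖q0‖ ≠ 0 := by simpa using hq0
  have hne : (‖q0‖) ^ cnt (List.ofFn (permAct σ α)) ≠ 0 := pow_ne_zero _ hane
  have key : ‖q0‖ ^ (Dm k - cnt (List.ofFn (permAct σ α)))
        * ‖q0‖ ^ cnt (List.ofFn (permAct σ α))
      = ‖lam‖ * ‖q0‖ ^ cnt (List.ofFn (permAct σ α)) := by
    rw [← pow_add, Nat.sub_add_cancel hle, habs]
  exact (mul_right_cancel₀ hne key).symm

end AuxW

theorem weight_formula_single_parameter (n : ℕ) (q0 : ℂ) (hq0 : q0 ≠ 0)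
    (q : Fin n → Fin n → ℂ)
    (hq : ∀ i j : Fin n, q i j = if i < j then q0 else if j < i then q0⁻¹ else 1)
    (w : (Fin n → ℕ) → ℝ) (hw : ∀ k, IsLeast (wSet q k) (w k)) :
    (1 ≤ ‖q0‖ → ∀ k : Fin n → ℕ, w k = 1) ∧
    (‖q0‖ < 1 → ∀ k : Fin n → ℕ,
      w k = ‖q0‖ ^
        (∑ p ∈ Finset.univ.filter (fun p : Fin n × Fin n => p.1 < p.2),
          k p.1 * k p.2)) := by
  constructor
  · intro h1 k
    obtain ⟨hmem, hlb⟩ := hw k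
    have hub : w k ≤ 1 := hlb (AuxW.one_mem q k)
    obtain ⟨σ, lam, α, hα, heq, hr⟩ := hmem
    obtain ⟨c, hc, habs⟩ := AuxW.abs_lam_eq q q0 hq0 hq hα heq
    have hge : (1 : ℝ) ≤ w k := by
      rw [hr, habs]
      exact one_le_pow₀ h1
    linarith
  · intro h1 k
    obtain ⟨hmem, hlb⟩ := hw k
    have hub : w k ≤ ‖q0‖ ^ AuxW.Dm k := hlb (AuxW.min_mem q q0 hq0 hq k)
    obtain ⟨σ, lam, α, hα, heq, hr⟩ := hmem
    obtain ⟨c, hc, habs⟩ := AuxW.abs_lam_eq q q0 hq0 hq hα heq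
    have hge : ‖q0‖ ^ AuxW.Dm k ≤ w k := by
      rw [hr, habs]
      exact pow_le_pow_of_le_one (norm_nonneg q0) h1.le (Nat.sub_le _ _)
    rw [← AuxW.Dm_pairs]
    linarith
end
end

section
/- Let S be a unital semigroup acting on a complete locally convex topological algebra A (with jointly continuous multiplication) by continuous endomorphisms, such that the action is equicontinuous. Then the action extends to a jointly continuous bilinear map ℓ¹(S) × A → A given by (∑_s c_s s, a) ↦ ∑_s c_s (s·a), where the family (c_s (s·a))_{s∈S} is absolutely summable in A; this makes A a left ℓ¹(S)-module algebra. Conversely, if A is a left ℓ¹(S)-module algebra (with jointly continuous action), then the induced action of S ⊂ ℓ¹(S) on A is equicontinuous. -/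
open Filter Topology SeparationQuotient
open scoped ENNReal NNReal

noncomputable section

namespace L1ModuleAux

variable {S : Type*} [DecidableEq S]
variable {A : Type*} [Ring A] [Algebra ℂ A] [UniformSpace A] [IsUniformAddGroup A]
    [IsTopologicalRing A] [ContinuousSMul ℂ A] [CompleteSpace A] [LocallyConvexSpace ℝ A]

variable {S : Type*} [DecidableEq S]
variable {A : Type*} [Ring A] [Algebra ℂ A] [UniformSpace A] [IsUniformAddGroup A]
    [IsTopologicalRing A] [ContinuousSMul ℂ A] [CompleteSpace A] [LocallyConvexSpace ℝ A]

theorem contRSMul : ContinuousSMul ℝ A := by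
  constructor
  have : (fun p : ℝ × A => p.1 • p.2) = fun p : ℝ × A => ((p.1 : ℂ) • p.2) := by
    funext p; rw [← algebraMap_smul ℂ p.1 p.2]; norm_num
  rw [this]; fun_prop

theorem seminorm_sum_le (p : Seminorm ℂ A) (f : S → A) (T : Finset S) :
    p (∑ s ∈ T, f s) ≤ ∑ s ∈ T, p (f s) :=
  Finset.le_sum_of_subadditive p (map_zero p).le (fun x y => map_add_le_add p x y) T f

theorem l1_hasSum_norm (c : lp (fun _ : S => ℂ) 1) :
    HasSum (fun s : S => ‖c s‖) ‖c‖ := by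
  have h := lp.hasSum_norm (by norm_num : 0 < (1 : ENNReal).toReal) c
  rw [ENNReal.toReal_one] at h
  simpa [Real.rpow_one] using h

theorem l1_summable_norm (c : lp (fun _ : S => ℂ) 1) : Summable fun s : S => ‖c s‖ :=
  (l1_hasSum_norm c).summable

theorem l1_partial_sum_le (c : lp (fun _ : S => ℂ) 1) (T : Finset S) :
    ∑ s ∈ T, ‖c s‖ ≤ ‖c‖ :=
  sum_le_hasSum T (fun s _ => norm_nonneg _) (l1_hasSum_norm c)

open scoped ComplexOrder in
instance locConvC : LocallyConvexSpace ℂ A := by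
  refine (locallyConvexSpace_iff_exists_convex_subset ℂ A).mpr ?_
  intro x U hU
  obtain ⟨T, hT, hTc, hTU⟩ :=
    (locallyConvexSpace_iff_exists_convex_subset ℝ A).mp inferInstance x U hU
  refine ⟨T, hT, ?_, hTU⟩
  intro y hy z hz a b ha hb hab
  obtain ⟨ha1, ha2⟩ := Complex.nonneg_iff.mp ha
  obtain ⟨hb1, hb2⟩ := Complex.nonneg_iff.mp hb
  have ea : a = (a.re : ℂ) := Complex.ext (by simp) (by simp [ha2])
  have eb : b = (b.re : ℂ) := Complex.ext (by simp) (by simp [hb2])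
  have hre : a.re + b.re = 1 := by simpa using congrArg Complex.re hab
  rw [ea, eb, Complex.coe_smul, Complex.coe_smul]
  exact hTc hy hz ha1 hb1 hre

/-- Every neighborhood of `0` contains a ball of a continuous seminorm. -/
theorem exists_seminorm_basis {e : Set A} (he : e ∈ 𝓝 (0 : A)) :
    ∃ p : Seminorm ℂ A, Continuous p ∧ ∃ r > 0, {x : A | p x < r} ⊆ e := by
  haveI := contRSMul (A := A)
  have hws : WithSeminorms (gaugeSeminormFamily ℂ A) := with_gaugeSeminormFamily
  obtain ⟨U, hU, hUe⟩ := hws.hasBasis.mem_iff.mp he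
  obtain ⟨i, r, hr, rfl⟩ := (gaugeSeminormFamily ℂ A).basisSets_iff.mp hU
  have hmem : (i.sup (gaugeSeminormFamily ℂ A)).ball 0 r ∈ 𝓝 (0 : A) :=
    hws.hasBasis.mem_of_mem hU
  refine ⟨i.sup (gaugeSeminormFamily ℂ A), Seminorm.continuous hmem, r, hr, ?_⟩
  intro x hx
  exact hUe ((Seminorm.mem_ball_zero _).mpr hx)

/-- Continuity criterion via seminorms. -/
theorem continuousAt_of_seminorm {X : Type*} [TopologicalSpace X] {f : X → A} {x₀ : X}
    (h : ∀ p : Seminorm ℂ A, Continuous p → ∃ g : X → ℝ, ContinuousAt g x₀ ∧ g x₀ = 0 ∧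
      ∀ x, p (f x - f x₀) ≤ g x) :
    ContinuousAt f x₀ := by
  haveI := contRSMul (A := A)
  have hws : WithSeminorms (gaugeSeminormFamily ℂ A) := with_gaugeSeminormFamily
  rw [ContinuousAt, hws.tendsto_nhds f (f x₀)]
  intro i ε hε
  obtain ⟨g, hg, hg0, hgle⟩ := h (gaugeSeminormFamily ℂ A i) (hws.continuous_seminorm i)
  have hgt : Tendsto g (𝓝 x₀) (𝓝 (0 : ℝ)) := by rw [← hg0]; exact hg
  filter_upwards [hgt (Iio_mem_nhds hε)] with x hx
  exact lt_of_le_of_lt (hgle x) hx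

theorem hasSum_mk_iff {f : S → A} {x : A} :
    HasSum f x ↔ HasSum (fun s => mk (f s)) (mk x) := by
  have hcoe : (fun T : Finset S => ∑ s ∈ T, mk (f s))
      = (mk ∘ fun T : Finset S => ∑ s ∈ T, f s) := by
    funext T
    exact (map_sum (mkCLM ℂ A) f T).symm
  rw [HasSum, HasSum, hcoe, ← Topology.IsInducing.tendsto_nhds_iff isInducing_mk]


set_option maxHeartbeats 2000000 in
theorem part_i (φ : S → A →ₐ[ℂ] A)
    (hequi : ∀ p : Seminorm ℂ A, Continuous p → ∃ q : Seminorm ℂ A, Continuous q ∧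
        ∀ (s : S) (a : A), p (φ s a) ≤ q a) :
    ∃ F : lp (fun _ : S => ℂ) 1 × A → A,
        Continuous F ∧
        (∀ c, IsLinearMap ℂ fun a : A => F (c, a)) ∧
        (∀ a, IsLinearMap ℂ fun c : lp (fun _ : S => ℂ) 1 => F (c, a)) ∧
        (∀ (c : lp (fun _ : S => ℂ) 1) (a : A),
          (∀ p : Seminorm ℂ A, Continuous p → Summable fun s : S => p (c s • φ s a)) ∧
          HasSum (fun s : S => c s • φ s a) (F (c, a))) ∧
        (∀ (c : lp (fun _ : S => ℂ) 1) (a b : A),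
          HasSum (fun s : S => c s • (φ s a * φ s b)) (F (c, a * b))) ∧
        (∀ (s : S) (a : A), F (lp.single 1 s 1, a) = φ s a) := by
  classical
  -- summability in A
  have hsum : ∀ (c : lp (fun _ : S => ℂ) 1) (a : A), Summable fun s : S => c s • φ s a := by
    intro c a
    rw [summable_iff_vanishing]
    intro e he
    obtain ⟨p, hp, r, hr, hball⟩ := exists_seminorm_basis he
    obtain ⟨q, hq, hpq⟩ := hequi p hp
    have hqa : (0:ℝ) ≤ q a := apply_nonneg q a
    obtain ⟨s₀, hs₀⟩ := summable_iff_vanishing.mp (l1_summable_norm c)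
      (Metric.ball 0 (r / (q a + 1))) (Metric.ball_mem_nhds _ (by positivity))
    refine ⟨s₀, fun t ht => hball ?_⟩
    have h1 : p (∑ s ∈ t, c s • φ s a) ≤ (∑ s ∈ t, ‖c s‖) * q a := by
      rw [Finset.sum_mul]
      refine (seminorm_sum_le p _ t).trans (Finset.sum_le_sum fun s _ => ?_)
      rw [map_smul_eq_mul]
      exact mul_le_mul_of_nonneg_left (hpq s a) (norm_nonneg _)
    have h2 : ∑ s ∈ t, ‖c s‖ < r / (q a + 1) := by
      have := hs₀ t ht
      rw [Metric.mem_ball, Real.dist_eq, sub_zero] at this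
      exact lt_of_le_of_lt (le_abs_self _) this
    have h3 : (∑ s ∈ t, ‖c s‖) * q a < r := by
      have hnn : (0:ℝ) ≤ ∑ s ∈ t, ‖c s‖ := Finset.sum_nonneg fun s _ => norm_nonneg _
      calc (∑ s ∈ t, ‖c s‖) * q a ≤ (∑ s ∈ t, ‖c s‖) * (q a + 1) :=
            mul_le_mul_of_nonneg_left (by linarith) hnn
        _ < (r / (q a + 1)) * (q a + 1) := by
            apply mul_lt_mul_of_pos_right h2 (by positivity)
        _ = r := div_mul_cancel₀ r (by positivity)
    exact lt_of_le_of_lt h1 h3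
  -- the separated quotient
  set Q := SeparationQuotient A with hQ
  set mkL : A →ₗ[ℂ] Q := (mkCLM ℂ A).toLinearMap with hmkL
  set G : lp (fun _ : S => ℂ) 1 → A → Q := fun c a => mk (∑' s, c s • φ s a) with hGdef
  have hG : ∀ c a, HasSum (fun s : S => mk (c s • φ s a)) (G c a) :=
    fun c a => hasSum_mk_iff.mp (hsum c a).hasSum
  -- additivity / homogeneity of G
  have hGa : ∀ c a a', G c (a + a') = G c a + G c a' := by
    intro c a a'
    have h2 := hG c (a + a')
    have heq : (fun s : S => mk (c s • φ s (a + a')))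
        = fun s : S => mk (c s • φ s a) + mk (c s • φ s a') := by
      funext s; rw [map_add (φ s), smul_add, mk_add]
    rw [heq] at h2
    exact h2.unique ((hG c a).add (hG c a'))
  have hGsa : ∀ c (z : ℂ) a, G c (z • a) = z • G c a := by
    intro c z a
    have h2 := hG c (z • a)
    have heq : (fun s : S => mk (c s • φ s (z • a)))
        = fun s : S => z • mk (c s • φ s a) := by
      funext s; rw [map_smul (φ s), smul_comm, mk_smul]
    rw [heq] at h2
    exact h2.unique ((hG c a).const_smul z)
  have hGc : ∀ c c' a, G (c + c') a = G c a + G c' a := by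
    intro c c' a
    have h2 := hG (c + c') a
    have heq : (fun s : S => mk ((c + c') s • φ s a))
        = fun s : S => mk (c s • φ s a) + mk (c' s • φ s a) := by
      funext s
      have : (c + c') s = c s + c' s := by rw [lp.coeFn_add]; rfl
      rw [this, add_smul, mk_add]
    rw [heq] at h2
    exact h2.unique ((hG c a).add (hG c' a))
  have hGsc : ∀ (z : ℂ) c a, G (z • c) a = z • G c a := by
    intro z c a
    have h2 := hG (z • c) a
    have heq : (fun s : S => mk ((z • c) s • φ s a))
        = fun s : S => z • mk (c s • φ s a) := by
      funext s
      have : (z • c) s = z * c s := by rw [lp.coeFn_smul]; rfl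
      rw [this, mul_smul, mk_smul]
    rw [heq] at h2
    exact h2.unique ((hG c a).const_smul z)
  have hG0 : ∀ a, G 0 a = 0 := by
    intro a
    have : (0 : lp (fun _ : S => ℂ) 1) = (0:ℂ) • (0 : lp (fun _ : S => ℂ) 1) := by simp
    rw [this, hGsc, zero_smul]
  -- a linear section of mk
  obtain ⟨σ, hσ⟩ := LinearMap.exists_rightInverse_of_surjective mkL
      (LinearMap.range_eq_top.mpr surjective_mk)
  have hσ' : ∀ z : Q, mk (σ z) = z := fun z => LinearMap.ext_iff.mp hσ z
  -- the finsupp embedding J and a retraction ρ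
  set J : (S →₀ ℂ) →ₗ[ℂ] lp (fun _ : S => ℂ) 1 :=
    Finsupp.linearCombination ℂ (fun s => lp.single 1 s 1) with hJdef
  have hJ : ∀ (d : S →₀ ℂ) (s : S), (J d : S → ℂ) s = d s := by
    intro d
    induction d using Finsupp.induction_linear with
    | zero => intro s; rw [map_zero, lp.coeFn_zero]; simp
    | add f g hf hg =>
      intro s
      rw [map_add, lp.coeFn_add, Pi.add_apply, hf, hg, Finsupp.add_apply]
    | single t z =>
      intro s
      rw [Finsupp.linearCombination_single, lp.coeFn_smul, Pi.smul_apply]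
      by_cases h : s = t
      · subst h; rw [lp.single_apply_self, Finsupp.single_apply_left (fun _ _ => id)]
        · simp
      · rw [Finsupp.single_apply, if_neg (fun hh => h hh.symm)]
        have : (lp.single 1 t (1:ℂ) : S → ℂ) s = 0 := by
          rw [lp.single_apply]
          exact dif_neg h
        rw [this, smul_zero]
  obtain ⟨ρ, hρ⟩ := LinearMap.exists_leftInverse_of_injective J
    (LinearMap.ker_eq_bot'.mpr fun d hd => Finsupp.ext fun s => by
      rw [← hJ d s, hd, lp.coeFn_zero]; rfl)
  have hρJ : ∀ d, ρ (J d) = d := fun d => LinearMap.ext_iff.mp hρ d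
  -- the finite-sum part H
  set H : (S →₀ ℂ) → A → A := fun d a => d.sum fun s z => z • φ s a with hHdef
  have hHsum : ∀ d a, HasSum (fun s : S => (J d : S → ℂ) s • φ s a) (H d a) := by
    intro d a
    have hvan : ∀ s ∉ d.support, (J d : S → ℂ) s • φ s a = 0 := fun s hs => by
      rw [hJ, Finsupp.notMem_support_iff.mp hs, zero_smul]
    have h : HasSum (fun s : S => (J d : S → ℂ) s • φ s a)
        (∑ s ∈ d.support, (J d : S → ℂ) s • φ s a) := hasSum_sum_of_ne_finset_zero hvan
    have : ∑ s ∈ d.support, (J d : S → ℂ) s • φ s a = H d a := by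
      have hHd : H d a = ∑ s ∈ d.support, d s • φ s a := rfl
      rw [hHd]
      exact Finset.sum_congr rfl fun s _ => by rw [hJ]
    rwa [this] at h
  have hmkH : ∀ d a, mk (H d a) = G (J d) a :=
    fun d a => (hasSum_mk_iff.mp (hHsum d a)).unique (hG (J d) a)
  -- linearity of H
  have hHda : ∀ d d' a, H (d + d') a = H d a + H d' a := fun d d' a =>
    Finsupp.sum_add_index' (fun s => zero_smul ℂ (φ s a)) (fun s z z' => add_smul z z' _)
  have hHsd : ∀ (z : ℂ) d a, H (z • d) a = z • H d a := by
    intro z d a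
    rw [hHdef]
    simp only
    rw [Finsupp.sum_smul_index' (fun s => zero_smul ℂ (φ s a)), Finsupp.smul_sum]
    exact Finset.sum_congr rfl fun s _ => by
      show (z • d s) • φ s a = z • (d s • φ s a)
      rw [smul_eq_mul, mul_smul]
  have hHaa : ∀ d a a', H d (a + a') = H d a + H d a' := by
    intro d a a'
    rw [hHdef]
    simp only
    rw [← Finsupp.sum_add]
    exact Finset.sum_congr rfl fun s _ => by
      show d s • φ s (a + a') = d s • φ s a + d s • φ s a'
      rw [map_add (φ s), smul_add]
  have hHsa : ∀ d (z : ℂ) a, H d (z • a) = z • H d a := by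
    intro d z a
    rw [hHdef]
    simp only
    rw [Finsupp.smul_sum]
    exact Finset.sum_congr rfl fun s _ => by
      show d s • φ s (z • a) = z • (d s • φ s a)
      rw [map_smul (φ s), smul_comm]
  -- the bilinear map F
  set F : lp (fun _ : S => ℂ) 1 × A → A :=
    fun x => H (ρ x.1) x.2 + σ (G (x.1 - J (ρ x.1)) x.2) with hFdef
  have hmkF : ∀ c a, mk (F (c, a)) = G c a := by
    intro c a
    show mk (H (ρ c) a + σ (G (c - J (ρ c)) a)) = G c a
    rw [mk_add, hmkH, hσ']
    have h := hGc (J (ρ c)) (c - J (ρ c)) a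
    rw [add_sub_cancel] at h
    exact h.symm
  have hFsum : ∀ c a, HasSum (fun s : S => c s • φ s a) (F (c, a)) := by
    intro c a
    rw [hasSum_mk_iff, hmkF]
    exact hG c a
  -- linearity
  have hlin_a : ∀ c, IsLinearMap ℂ fun a : A => F (c, a) := by
    intro c
    constructor
    · intro a a'
      simp only [hFdef]
      rw [hHaa, hGa, map_add σ]
      abel
    · intro z a
      simp only [hFdef]
      rw [hHsa, hGsa, map_smul σ, smul_add]
  have hlin_c : ∀ a, IsLinearMap ℂ fun c : lp (fun _ : S => ℂ) 1 => F (c, a) := by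
    intro a
    constructor
    · intro c c'
      simp only [hFdef]
      have hsub : (c + c') - J (ρ (c + c')) = (c - J (ρ c)) + (c' - J (ρ c')) := by
        rw [map_add ρ, map_add J]; abel
      rw [hsub, hGc, map_add σ, map_add ρ, hHda]
      abel
    · intro z c
      simp only [hFdef]
      have hsub : (z • c) - J (ρ (z • c)) = z • (c - J (ρ c)) := by
        rw [map_smul ρ, map_smul J, smul_sub]
      rw [hsub, hGsc, map_smul σ, map_smul ρ, hHsd, smul_add]
  -- the value on single
  have hsingle : ∀ (s : S) (a : A), F (lp.single 1 s 1, a) = φ s a := by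
    intro s a
    have h1 : lp.single 1 s (1:ℂ) = J (Finsupp.single s 1) := by
      rw [hJdef]
      simp only [Finsupp.linearCombination_single, one_smul]
    simp only [hFdef]
    rw [h1, hρJ, sub_self, hG0, map_zero, add_zero]
    show (Finsupp.single s (1:ℂ)).sum (fun s z => z • φ s a) = φ s a
    rw [Finsupp.sum_single_index (zero_smul ℂ (φ s a)), one_smul]
  -- bound
  have hbound : ∀ (p q : Seminorm ℂ A), (∀ s a, p (φ s a) ≤ q a) → Continuous p →
      ∀ c a, p (F (c, a)) ≤ ‖c‖ * q a := by
    intro p q hpq hp c a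
    have ht : Tendsto (fun T : Finset S => p (∑ s ∈ T, c s • φ s a)) atTop
        (𝓝 (p (F (c, a)))) := (hp.tendsto _).comp (hFsum c a)
    refine le_of_tendsto ht (Eventually.of_forall fun T => ?_)
    calc p (∑ s ∈ T, c s • φ s a) ≤ ∑ s ∈ T, p (c s • φ s a) := seminorm_sum_le p _ T
      _ ≤ ∑ s ∈ T, ‖c s‖ * q a := Finset.sum_le_sum fun s _ => by
          rw [map_smul_eq_mul]
          exact mul_le_mul_of_nonneg_left (hpq s a) (norm_nonneg _)
      _ = (∑ s ∈ T, ‖c s‖) * q a := (Finset.sum_mul _ _ _).symm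
      _ ≤ ‖c‖ * q a := mul_le_mul_of_nonneg_right (l1_partial_sum_le c T) (apply_nonneg q a)
  -- continuity
  have hFcont : Continuous F := by
    rw [continuous_iff_continuousAt]
    intro x₀
    apply continuousAt_of_seminorm
    intro p hp
    obtain ⟨q, hq, hpq⟩ := hequi p hp
    refine ⟨fun x => ‖x.1 - x₀.1‖ * (q x₀.2 + q (x.2 - x₀.2)) + ‖x₀.1‖ * q (x.2 - x₀.2),
      ?_, by simp, ?_⟩
    · apply Continuous.continuousAt
      fun_prop
    · intro x
      have hdecomp : F x - F x₀ = F (x.1 - x₀.1, x.2) + F (x₀.1, x.2 - x₀.2) := by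
        rw [(hlin_c x.2).map_sub, (hlin_a x₀.1).map_sub]
        abel
      rw [hdecomp]
      refine (map_add_le_add p _ _).trans ?_
      have b1 := hbound p q hpq hp (x.1 - x₀.1) x.2
      have b2 := hbound p q hpq hp x₀.1 (x.2 - x₀.2)
      have hqx : q x.2 ≤ q x₀.2 + q (x.2 - x₀.2) := by
        have h := map_add_le_add q x₀.2 (x.2 - x₀.2)
        rwa [add_sub_cancel] at h
      have b1' : p (F (x.1 - x₀.1, x.2)) ≤ ‖x.1 - x₀.1‖ * (q x₀.2 + q (x.2 - x₀.2)) :=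
        b1.trans (mul_le_mul_of_nonneg_left hqx (norm_nonneg _))
      exact add_le_add b1' b2
  -- summability of seminorm values
  have hsump : ∀ (c : lp (fun _ : S => ℂ) 1) (a : A) (p : Seminorm ℂ A), Continuous p →
      Summable fun s : S => p (c s • φ s a) := by
    intro c a p hp
    obtain ⟨q, hq, hpq⟩ := hequi p hp
    refine Summable.of_nonneg_of_le (fun s => apply_nonneg p _) (fun s => ?_)
      ((l1_summable_norm c).mul_right (q a))
    rw [map_smul_eq_mul]
    exact mul_le_mul_of_nonneg_left (hpq s a) (norm_nonneg _)
  refine ⟨F, hFcont, hlin_a, hlin_c, fun c a => ⟨fun p hp => hsump c a p hp, hFsum c a⟩,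
    ?_, hsingle⟩
  intro c a b
  have h := hFsum c (a * b)
  have heq : (fun s : S => c s • φ s (a * b)) = fun s : S => c s • (φ s a * φ s b) := by
    funext s; rw [map_mul]
  rwa [heq] at h


theorem part_ii (φ : S → A →ₐ[ℂ] A) (F : lp (fun _ : S => ℂ) 1 × A → A)
    (hFc : Continuous F)
    (hlin_a : ∀ c, IsLinearMap ℂ fun a : A => F (c, a))
    (hlin_c : ∀ a, IsLinearMap ℂ fun c : lp (fun _ : S => ℂ) 1 => F (c, a))
    (hsingle : ∀ (s : S) (a : A), F (lp.single 1 s 1, a) = φ s a)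
    (p : Seminorm ℂ A) (hp : Continuous p) :
    ∃ q : Seminorm ℂ A, Continuous q ∧ ∀ (s : S) (a : A), p (φ s a) ≤ q a := by
  haveI := contRSMul (A := A)
  have hws : WithSeminorms (gaugeSeminormFamily ℂ A) := with_gaugeSeminormFamily
  have hF00 : F (0, 0) = 0 := (hlin_a 0).map_zero
  -- the preimage of the unit p-ball is a neighborhood of (0,0)
  have hU : F ⁻¹' {x : A | p x < 1} ∈ 𝓝 ((0 : lp (fun _ : S => ℂ) 1), (0 : A)) := by
    have hopen : {x : A | p x < 1} ∈ 𝓝 (0 : A) := by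
      have : IsOpen {x : A | p x < 1} := isOpen_lt hp continuous_const
      exact this.mem_nhds (by simp)
    have := hFc.continuousAt (x := ((0 : lp (fun _ : S => ℂ) 1), (0 : A)))
    rw [ContinuousAt, hF00] at this
    exact this hopen
  rw [nhds_prod_eq] at hU
  obtain ⟨⟨ε, U⟩, ⟨hε, hUb⟩, hsub⟩ :=
    ((Metric.nhds_basis_ball.prod hws.hasBasis).mem_iff).mp hU
  obtain ⟨i, r, hr, rfl⟩ := (gaugeSeminormFamily ℂ A).basisSets_iff.mp hUb
  set q₀ : Seminorm ℂ A := i.sup (gaugeSeminormFamily ℂ A) with hq₀def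
  have hq₀mem : q₀.ball 0 r ∈ 𝓝 (0 : A) := hws.hasBasis.mem_of_mem hUb
  have hq₀cont : Continuous q₀ := Seminorm.continuous hq₀mem
  -- step 1: a uniform bound on the ball
  have claim1 : ∀ (s : S) (a : A), q₀ a < r → p (φ s a) ≤ 2 / ε := by
    intro s a ha
    set c : lp (fun _ : S => ℂ) 1 := ((ε/2 : ℝ) : ℂ) • lp.single 1 s 1 with hcdef
    have hnorm : ‖c‖ = ε / 2 := by
      rw [hcdef, norm_smul]
      have h1 : ‖(lp.single 1 s (1:ℂ) : lp (fun _ : S => ℂ) 1)‖ = 1 := by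
        have := lp.norm_single (E := fun _ : S => ℂ) (p := 1)
          (by norm_num : (0 : ENNReal) < 1) s (1:ℂ)
        simpa using this
      rw [h1, mul_one, Complex.norm_real, Real.norm_of_nonneg (by positivity)]
    have hmem : (c, a) ∈ Metric.ball (0 : lp (fun _ : S => ℂ) 1) ε ×ˢ q₀.ball 0 r := by
      constructor
      · rw [Metric.mem_ball, dist_zero_right, hnorm]
        linarith
      · exact (Seminorm.mem_ball_zero q₀).mpr ha
    have hlt : p (F (c, a)) < 1 := hsub hmem
    have hFca : F (c, a) = ((ε/2 : ℝ) : ℂ) • φ s a := by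
      rw [hcdef, (hlin_c a).map_smul, hsingle]
    rw [hFca, map_smul_eq_mul, Complex.norm_real, Real.norm_of_nonneg (by positivity)] at hlt
    rw [le_div_iff₀ (by positivity : (0:ℝ) < ε)]
    nlinarith [apply_nonneg p (φ s a)]
  set M : ℝ := 2 / ε with hMdef
  have hM : 0 ≤ M := by positivity
  -- step 2: scaling
  have claim2 : ∀ (s : S) (a : A), p (φ s a) ≤ (2 * M / r) * q₀ a := by
    intro s a
    have key : ∀ t : ℝ, 0 < t → t * q₀ a < r → t * p (φ s a) ≤ M := by
      intro t ht hta
      have h1 : q₀ ((t : ℂ) • a) < r := by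
        rw [map_smul_eq_mul, Complex.norm_real, Real.norm_of_nonneg ht.le]
        exact hta
      have h2 := claim1 s ((t : ℂ) • a) h1
      rwa [map_smul (φ s), map_smul_eq_mul, Complex.norm_real, Real.norm_of_nonneg ht.le] at h2
    by_cases h0 : q₀ a = 0
    · have hzero : p (φ s a) = 0 := by
        by_contra hne
        have hpos : 0 < p (φ s a) := lt_of_le_of_ne (apply_nonneg _ _) (Ne.symm hne)
        have ht : 0 < (M + 1) / p (φ s a) := by positivity
        have := key _ ht (by rw [h0, mul_zero]; exact hr)
        rw [div_mul_cancel₀ _ (ne_of_gt hpos)] at this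
        linarith
      rw [hzero, h0, mul_zero]
    · have hq0pos : 0 < q₀ a := lt_of_le_of_ne (apply_nonneg _ _) (Ne.symm h0)
      have ht : 0 < r / (2 * q₀ a) := by positivity
      have hta : (r / (2 * q₀ a)) * q₀ a < r := by
        rw [div_mul_eq_mul_div, mul_comm]
        rw [div_lt_iff₀ (by positivity)]
        nlinarith
      have hkey := key _ ht hta
      have h2 : r * p (φ s a) ≤ M * (2 * q₀ a) := by
        have h' := mul_le_mul_of_nonneg_left hkey (by positivity : (0:ℝ) ≤ 2 * q₀ a)
        calc r * p (φ s a) = (2 * q₀ a) * ((r / (2 * q₀ a)) * p (φ s a)) := by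
              field_simp
              try ring
          _ ≤ (2 * q₀ a) * M := h'
          _ = M * (2 * q₀ a) := mul_comm _ _
      rw [div_mul_eq_mul_div, le_div_iff₀ hr]
      nlinarith [h2]
  -- assemble q
  set C : ℝ≥0 := Real.toNNReal (2 * M / r) with hCdef
  refine ⟨C • q₀, ?_, ?_⟩
  · have hcontm : Continuous fun a : A => (C : ℝ) * q₀ a := continuous_const.mul hq₀cont
    have heq : (⇑(C • q₀) : A → ℝ) = fun a : A => (C : ℝ) * q₀ a := by
      funext a
      rw [Seminorm.smul_apply, NNReal.smul_def, smul_eq_mul]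
    rw [heq]
    exact hcontm
  · intro s a
    have := claim2 s a
    rw [Seminorm.smul_apply]
    have hC : (C : ℝ) = 2 * M / r := Real.coe_toNNReal _ (by positivity)
    rw [NNReal.smul_def, smul_eq_mul, hC]
    exact this

end L1ModuleAux


theorem l1_module_algebra_iff_equicontinuous
    (S : Type*) [Monoid S] [DecidableEq S]
    (A : Type*) [Ring A] [Algebra ℂ A] [UniformSpace A] [IsUniformAddGroup A]
    [IsTopologicalRing A] [ContinuousSMul ℂ A] [CompleteSpace A] [LocallyConvexSpace ℝ A]
    -- the action of S on A by continuous (unital) algebra endomorphisms: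
    (φ : S → A →ₐ[ℂ] A)
    (hφone : φ 1 = AlgHom.id ℂ A)
    (hφmul : ∀ s t, φ (s * t) = (φ s).comp (φ t))
    (hφcont : ∀ s, Continuous (φ s)) :
    -- (i) if the action is equicontinuous, it extends to ℓ¹(S):
    ((∀ p : Seminorm ℂ A, Continuous p → ∃ q : Seminorm ℂ A, Continuous q ∧
        ∀ (s : S) (a : A), p (φ s a) ≤ q a) →
      ∃ F : lp (fun _ : S => ℂ) 1 × A → A,
        Continuous F ∧
        (∀ c, IsLinearMap ℂ fun a : A => F (c, a)) ∧
        (∀ a, IsLinearMap ℂ fun c : lp (fun _ : S => ℂ) 1 => F (c, a)) ∧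
        -- absolute summability of (c_s (s·a)) and F (c, a) = ∑_s c_s (s·a):
        (∀ (c : lp (fun _ : S => ℂ) 1) (a : A),
          (∀ p : Seminorm ℂ A, Continuous p → Summable fun s : S => p (c s • φ s a)) ∧
          HasSum (fun s : S => c s • φ s a) (F (c, a))) ∧
        -- F makes A a left ℓ¹(S)-module algebra (the comultiplication of ℓ¹(S) is
        -- determined by Δ(s) = s ⊗ s, so c·(ab) = ∑_s c_s (s·a)(s·b)):
        (∀ (c : lp (fun _ : S => ℂ) 1) (a b : A),
          HasSum (fun s : S => c s • (φ s a * φ s b)) (F (c, a * b))) ∧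
        (∀ (s : S) (a : A), F (lp.single 1 s 1, a) = φ s a)) ∧
    -- (ii) conversely, a jointly continuous ℓ¹(S)-module algebra structure restricting
    -- to φ on S makes the action of S equicontinuous:
    (∀ F : lp (fun _ : S => ℂ) 1 × A → A,
      Continuous F →
      (∀ c, IsLinearMap ℂ fun a : A => F (c, a)) →
      (∀ a, IsLinearMap ℂ fun c : lp (fun _ : S => ℂ) 1 => F (c, a)) →
      (∀ (s : S) (a : A), F (lp.single 1 s 1, a) = φ s a) →
      ∀ p : Seminorm ℂ A, Continuous p → ∃ q : Seminorm ℂ A, Continuous q ∧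
        ∀ (s : S) (a : A), p (φ s a) ≤ q a) :=
  ⟨fun hequi => L1ModuleAux.part_i φ hequi,
   fun F hc hla hlc hs p hp => L1ModuleAux.part_ii φ F hc hla hlc hs p hp⟩
end
end
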